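/- arXiv:math/0411557 — 8 statements merged into one kernel-verified Lean document; each statement's English description precedes it below -/
import Mathlib

section
/- For every natural number n ≥ 2, the number of rank-2 matroids on a fixed n-element ground set equals b(n+1) − 2^n, where b(k) denotes the k-th Bell number. -/
/-- The `k`-th Bell number: the number of equivalence relations (partitions) of a
`k`-element set. -/
noncomputable def bellNum (k : ℕ) : ℕ := Nat.card (Setoid (Fin k))

open Set

namespace RankTwoCount

/-- Transfer a setoid along an equivalence. -/
def setoidCongr {α β : Type*} (e : α ≃ β) : Setoid α ≃ Setoid β where
  toFun s := ⟨fun a b => s.r (e.symm a) (e.symm b),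
    ⟨fun _ => s.iseqv.refl _, fun h => s.iseqv.symm h, fun h h' => s.iseqv.trans h h'⟩⟩
  invFun s := ⟨fun a b => s.r (e a) (e b),
    ⟨fun _ => s.iseqv.refl _, fun h => s.iseqv.symm h, fun h h' => s.iseqv.trans h h'⟩⟩
  left_inv s := Setoid.ext fun a b => by show s.r (e.symm (e a)) (e.symm (e b)) ↔ s.r a b; simp
  right_inv s := Setoid.ext fun a b => by show s.r (e (e.symm a)) (e (e.symm b)) ↔ s.r a b; simp

variable {n : ℕ}

instance : Finite (Setoid (Option (Fin n))) :=
  Finite.of_injective (fun s => s.r) fun s t h =>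
    Setoid.ext fun a b => iff_of_eq (congrFun₂ h a b)

/-- A "bad" setoid : at most one equivalence class avoids `none`. -/
def Bad (s : Setoid (Option (Fin n))) : Prop :=
  ∀ x y : Fin n, ¬ s.r (some x) none → ¬ s.r (some y) none → s.r (some x) (some y)

/-- The setoid with (at most) two blocks: `T` and its complement. -/
def twoBlock (T : Set (Option (Fin n))) : Setoid (Option (Fin n)) :=
  ⟨fun a b => (a ∈ T ↔ b ∈ T), ⟨fun _ => Iff.rfl, Iff.symm, Iff.trans⟩⟩

def badEquiv : {s : Setoid (Option (Fin n)) // Bad s} ≃ Set (Fin n) where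
  toFun s := {x | s.1.r (some x) none}
  invFun S := ⟨twoBlock (insert none (some '' S)), by
    intro x y hx hy
    have hnn : (none : Option (Fin n)) ∈ insert none (some '' S) := mem_insert _ _
    have hx' : some x ∉ insert none (some '' S) := fun h => hx ⟨fun _ => hnn, fun _ => h⟩
    have hy' : some y ∉ insert none (some '' S) := fun h => hy ⟨fun _ => hnn, fun _ => h⟩
    exact ⟨fun h => absurd h hx', fun h => absurd h hy'⟩⟩
  left_inv := by
    rintro ⟨s, hs⟩
    refine Subtype.ext (Setoid.ext fun a b => ?_)
    have key : ∀ a : Option (Fin n),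
        (a ∈ insert none (some '' {x | s.r (some x) none}) ↔ s.r a none) := by
      rintro (_ | x)
      · simp [s.iseqv.refl]
      · simp
    show (_ ↔ _) ↔ _
    rw [key a, key b]
    constructor
    · rintro h
      by_cases ha : s.r a none
      · exact s.iseqv.trans ha (s.iseqv.symm (h.mp ha))
      · have hb : ¬ s.r b none := fun hb => ha (h.mpr hb)
        match a, b with
        | none, _ => exact absurd (s.iseqv.refl none) ha
        | _, none => exact absurd (s.iseqv.refl none) hb
        | some x, some y => exact hs x y ha hb
    · intro h
      exact ⟨fun ha => s.iseqv.trans (s.iseqv.symm h) ha, fun hb => s.iseqv.trans h hb⟩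
  right_inv := by
    intro S
    ext x
    show ((some x ∈ _) ↔ ((none : Option (Fin n)) ∈ _)) ↔ x ∈ S
    simp

/-- Independence for the rank-≤2 matroid associated to a setoid on `Option (Fin n)`:
sets of at most 2 non-loop elements, pairwise inequivalent. -/
def mIndep (s : Setoid (Option (Fin n))) (I : Set (Fin n)) : Prop :=
  I.ncard ≤ 2 ∧ (∀ x ∈ I, ¬ s.r (some x) none) ∧
    I.Pairwise fun x y => ¬ s.r (some x) (some y)

lemma mIndep_empty (s : Setoid (Option (Fin n))) : mIndep s ∅ := by
  simp [mIndep]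

lemma mIndep_subset {s : Setoid (Option (Fin n))} ⦃I J : Set (Fin n)⦄
    (hJ : mIndep s J) (h : I ⊆ J) : mIndep s I :=
  ⟨le_trans (ncard_le_ncard h J.toFinite) hJ.1, fun x hx => hJ.2.1 x (h hx), hJ.2.2.mono h⟩

lemma rel_symm_not {s : Setoid (Option (Fin n))} :
    Symmetric fun x y : Fin n => ¬ s.r (some x) (some y) :=
  fun _ _ h h' => h (s.iseqv.symm h')

lemma mIndep_pair {s : Setoid (Option (Fin n))} {a e : Fin n}
    (ha : ¬ s.r (some a) none) (he : ¬ s.r (some e) none)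
    (hae : ¬ s.r (some a) (some e)) : mIndep s {a, e} := by
  have hne : a ≠ e := by rintro rfl; exact hae (s.iseqv.refl _)
  refine ⟨by rw [ncard_pair hne], by rintro x (rfl | rfl) <;> assumption, ?_⟩
  exact pairwise_pair.mpr fun _ => ⟨hae, rel_symm_not hae⟩

lemma mIndep_aug {s : Setoid (Option (Fin n))} ⦃I J : Set (Fin n)⦄
    (hI : mIndep s I) (hJ : mIndep s J) (hlt : I.ncard < J.ncard) :
    ∃ e ∈ J, e ∉ I ∧ mIndep s (insert e I) := by
  have hJ2 := hJ.1
  have hIle : I.ncard ≤ 2 := hI.1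
  interval_cases hc : I.ncard
  · -- I = ∅
    have hIe : I = ∅ := (ncard_eq_zero I.toFinite).mp hc
    obtain ⟨e, he⟩ := nonempty_of_ncard_ne_zero (show J.ncard ≠ 0 by omega)
    refine ⟨e, he, by simp [hIe], ?_⟩
    rw [hIe, insert_empty_eq]
    exact ⟨by simp, by simpa using hJ.2.1 e he, by simp⟩
  · -- I = {a}, J has two elements
    obtain ⟨a, rfl⟩ := (ncard_eq_one).mp hc
    have hJe : J.ncard = 2 := le_antisymm hJ2 hlt
    obtain ⟨b, c, hbc, rfl⟩ := (ncard_eq_two).mp hJe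
    have hb := hJ.2.1 b (by simp)
    have hcl := hJ.2.1 c (by simp)
    have hbcr : ¬ s.r (some b) (some c) := hJ.2.2 (by simp) (by simp) hbc
    have ha : ¬ s.r (some a) none := hI.2.1 a rfl
    by_cases hab : s.r (some a) (some b)
    · have hac : ¬ s.r (some c) (some a) := fun h =>
        hbcr (s.iseqv.trans (s.iseqv.symm hab) (s.iseqv.symm h))
      have hane : c ≠ a := by rintro rfl; exact hbcr (s.iseqv.symm hab)
      exact ⟨c, by simp, by simpa using hane, mIndep_pair hcl ha hac⟩
    · rcases eq_or_ne a b with rfl | hba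
      · have hca : ¬ s.r (some c) (some a) := fun h => hbcr (s.iseqv.symm h)
        exact ⟨c, by simp, by simpa using hbc.symm, mIndep_pair hcl ha hca⟩
      · have hba' : ¬ s.r (some b) (some a) := fun h => hab (s.iseqv.symm h)
        exact ⟨b, by simp, by simpa using (Ne.symm hba), mIndep_pair hb ha hba'⟩
  · -- impossible: J.ncard > 2
    omega

/-- The matroid associated to a setoid on `Option (Fin n)`. -/
def toMatroid (s : Setoid (Option (Fin n))) : Matroid (Fin n) :=
  (IndepMatroid.ofFinite finite_univ (mIndep s) (mIndep_empty s) mIndep_subset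
    mIndep_aug (fun I _ => subset_univ I)).matroid

@[simp] lemma toMatroid_E (s : Setoid (Option (Fin n))) : (toMatroid s).E = univ := rfl

@[simp] lemma toMatroid_indep (s : Setoid (Option (Fin n))) (I : Set (Fin n)) :
    (toMatroid s).Indep I ↔ mIndep s I := by
  simp [toMatroid]

/-- In a good (non-bad) setoid, every non-loop has a non-equivalent non-loop partner. -/
lemma exists_third {s : Setoid (Option (Fin n))} (hs : ¬ Bad s) {a : Fin n}
    (ha : ¬ s.r (some a) none) :
    ∃ e : Fin n, ¬ s.r (some e) none ∧ ¬ s.r (some a) (some e) := by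
  simp only [Bad, not_forall] at hs
  obtain ⟨x, y, hx, hy, hxy⟩ := hs
  by_cases hax : s.r (some a) (some x)
  · exact ⟨y, hy, fun h => hxy (s.iseqv.trans (s.iseqv.symm hax) h)⟩
  · exact ⟨x, hx, hax⟩

lemma toMatroid_base_ncard {s : Setoid (Option (Fin n))} (hs : ¬ Bad s)
    {B : Set (Fin n)} (hB : (toMatroid s).IsBase B) : B.ncard = 2 := by
  have hBi : mIndep s B := (toMatroid_indep s B).mp hB.indep
  rcases Nat.lt_or_ge B.ncard 2 with h2 | h2
  · exfalso
    interval_cases hc : B.ncard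
    · -- B = ∅ : but there is a nonempty independent set
      have hBe : B = ∅ := (ncard_eq_zero B.toFinite).mp hc
      simp only [Bad, not_forall] at hs
      obtain ⟨x, y, hx, hy, hxy⟩ := hs
      subst hBe
      have h0 : (∅ : Set (Fin n)) = {x} := hB.eq_of_subset_indep
        ((toMatroid_indep s _).mpr ⟨by simp, by simpa using hx, by simp⟩) (empty_subset _)
      exact (singleton_ne_empty x) h0.symm
    · obtain ⟨a, rfl⟩ := (ncard_eq_one).mp hc
      obtain ⟨e, he, hae⟩ := exists_third hs (hBi.2.1 a rfl)
      have hne : a ≠ e := by rintro rfl; exact hae (s.iseqv.refl _)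
      have : ({a} : Set (Fin n)) = {a, e} := hB.eq_of_subset_indep
        ((toMatroid_indep s _).mpr (mIndep_pair (hBi.2.1 a rfl) he hae)) (by simp)
      have : e ∈ ({a} : Set (Fin n)) := this ▸ (by simp : e ∈ ({a, e} : Set (Fin n)))
      exact hne (by simpa using this.symm)
  · have := hBi.1
    omega

/-- Parallelism is transitive among non-loops in a matroid. -/
lemma para_trans (M : Matroid (Fin n)) (hE : M.E = univ) {x y z : Fin n}
    (hx : M.Indep {x}) (hy : M.Indep {y}) (hxy : ¬ M.Indep {x, y})
    (hyz : ¬ M.Indep {y, z}) (hxz : x ≠ z) : ¬ M.Indep {x, z} := by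
  have hgr : ∀ X : Set (Fin n), X ⊆ M.E := fun X => hE ▸ subset_univ X
  have hyx : y ∈ M.closure {x} := by
    rw [hx.mem_closure_iff]
    exact Or.inl ⟨fun h => hxy (by rwa [pair_comm] at h), hgr _⟩
  have hzy : z ∈ M.closure {y} := by
    rw [hy.mem_closure_iff]
    exact Or.inl ⟨fun h => hyz (by rwa [pair_comm] at h), hgr _⟩
  have hsub : M.closure {y} ⊆ M.closure {x} := by
    have := Matroid.closure_insert_eq_of_mem_closure hyx
    rw [← this]
    exact M.closure_subset_closure (by simp)
  have hzx : z ∈ M.closure {x} := hsub hzy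
  rw [hx.mem_closure_iff] at hzx
  rcases hzx with h | h
  · intro hi
    exact h.1 (by rwa [pair_comm] at hi)
  · simp at h
    exact absurd h.symm hxz

/-- The parallelism relation on `Option (Fin n)` induced by a matroid:
`none` is glued to all loops; non-loops are related iff parallel. -/
def pRel (M : Matroid (Fin n)) : Option (Fin n) → Option (Fin n) → Prop
  | none, none => True
  | none, some y => ¬ M.Indep {y}
  | some x, none => ¬ M.Indep {x}
  | some x, some y => x = y ∨ (¬ M.Indep {x} ∧ ¬ M.Indep {y}) ∨
      (M.Indep {x} ∧ M.Indep {y} ∧ ¬ M.Indep {x, y})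

def toSetoid (M : Matroid (Fin n)) (hE : M.E = univ) : Setoid (Option (Fin n)) := by
  refine ⟨pRel M, ⟨?_, ?_, ?_⟩⟩
  · rintro (_ | x)
    · trivial
    · exact Or.inl rfl
  · rintro (_ | x) (_ | y) h
    · trivial
    · exact h
    · exact h
    · rcases h with rfl | ⟨h1, h2⟩ | ⟨h1, h2, h3⟩
      · exact Or.inl rfl
      · exact Or.inr (Or.inl ⟨h2, h1⟩)
      · exact Or.inr (Or.inr ⟨h2, h1, by rwa [pair_comm]⟩)
  · rintro (_ | x) (_ | y) (_ | z) hab hbc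
    · trivial
    · exact hbc
    · trivial
    · rcases hbc with rfl | ⟨h1, h2⟩ | ⟨h1, _⟩
      · exact hab
      · exact h2
      · exact absurd hab (not_not_intro h1)
    · trivial
    · exact Or.inr (Or.inl ⟨hab, hbc⟩)
    · rcases hab with rfl | ⟨h1, _⟩ | ⟨h1, h2, _⟩
      · exact hbc
      · exact h1
      · exact absurd hbc (not_not_intro h2)
    · rcases hab with rfl | ⟨h1, h2⟩ | ⟨h1, h2, h3⟩
      · exact hbc
      · rcases hbc with rfl | ⟨h3, h4⟩ | ⟨h3, _⟩
        · exact Or.inr (Or.inl ⟨h1, h2⟩)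
        · exact Or.inr (Or.inl ⟨h1, h4⟩)
        · exact absurd h3 h2
      · rcases hbc with rfl | ⟨h4, _⟩ | ⟨h4, h5, h6⟩
        · exact Or.inr (Or.inr ⟨h1, h2, h3⟩)
        · exact absurd h2 h4
        · by_cases hxz : x = z
          · exact Or.inl hxz
          · exact Or.inr (Or.inr ⟨h1, h5, para_trans M hE h1 h2 h3 h6 hxz⟩)

/-- A matroid all of whose bases have two elements has independent sets of size ≤ 2. -/
lemma indep_ncard_le {M : Matroid (Fin n)} (hB : ∀ B, M.IsBase B → B.ncard = 2)
    {I : Set (Fin n)} (hI : M.Indep I) : I.ncard ≤ 2 := by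
  obtain ⟨B, hBb, hIB⟩ := hI.exists_isBase_superset
  have := ncard_le_ncard hIB B.toFinite
  rw [hB B hBb] at this
  exact this

lemma toSetoid_not_bad {M : Matroid (Fin n)} (hE : M.E = univ)
    (hB : ∀ B, M.IsBase B → B.ncard = 2) : ¬ Bad (toSetoid M hE) := by
  obtain ⟨B, hBb⟩ := M.exists_isBase
  obtain ⟨x, y, hxy, rfl⟩ := (ncard_eq_two).mp (hB B hBb)
  have hp : M.Indep {x, y} := hBb.indep
  have hx : M.Indep {x} := hp.subset (by simp)
  have hy : M.Indep {y} := hp.subset (by simp)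
  intro hbad
  have := hbad x y (not_not_intro hx) (not_not_intro hy)
  rcases this with rfl | ⟨h1, _⟩ | ⟨_, _, h3⟩
  · exact hxy rfl
  · exact h1 hx
  · exact h3 hp

lemma mIndep_toSetoid_iff {M : Matroid (Fin n)} (hE : M.E = univ)
    (hB : ∀ B, M.IsBase B → B.ncard = 2) (I : Set (Fin n)) :
    mIndep (toSetoid M hE) I ↔ M.Indep I := by
  constructor
  · rintro ⟨h1, h2, h3⟩
    have h2' : ∀ x ∈ I, M.Indep {x} := fun x hx => not_not.mp (h2 x hx)
    interval_cases hc : I.ncard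
    · rw [(ncard_eq_zero I.toFinite).mp hc]; exact M.empty_indep
    · obtain ⟨a, rfl⟩ := (ncard_eq_one).mp hc
      exact h2' a rfl
    · obtain ⟨a, b, hab, rfl⟩ := (ncard_eq_two).mp hc
      have := h3 (show a ∈ ({a,b} : Set (Fin n)) by simp)
        (show b ∈ ({a,b} : Set (Fin n)) by simp) hab
      show M.Indep {a, b}
      by_contra hdep
      exact this (Or.inr (Or.inr ⟨h2' a (by simp), h2' b (by simp), hdep⟩))
  · intro hI
    refine ⟨indep_ncard_le hB hI, fun x hx => not_not_intro (hI.subset (by simpa using hx)), ?_⟩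
    intro x hx y hy hxy h
    rcases h with rfl | ⟨h1, _⟩ | ⟨_, _, h3⟩
    · exact hxy rfl
    · exact h1 (hI.subset (by simpa using hx))
    · exact h3 (hI.subset (by simp [hx, hy, insert_subset_iff]))

lemma left_roundtrip {M : Matroid (Fin n)} (hE : M.E = univ)
    (hB : ∀ B, M.IsBase B → B.ncard = 2) : toMatroid (toSetoid M hE) = M := by
  refine Matroid.ext_indep (by rw [toMatroid_E, hE]) fun I _ => ?_
  rw [toMatroid_indep, mIndep_toSetoid_iff hE hB]

lemma right_roundtrip {s : Setoid (Option (Fin n))} (hs : ¬ Bad s) :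
    toSetoid (toMatroid s) (toMatroid_E s) = s := by
  have hsingle : ∀ x : Fin n, (toMatroid s).Indep {x} ↔ ¬ s.r (some x) none := by
    intro x
    rw [toMatroid_indep]
    constructor
    · exact fun h => h.2.1 x rfl
    · intro h
      exact ⟨by simp, by simpa using h, by simp⟩
  refine Setoid.ext fun a b => ?_
  match a, b with
  | none, none => simpa [toSetoid, pRel] using s.iseqv.refl none
  | none, some y =>
      show pRel _ _ _ ↔ _
      rw [pRel, hsingle, not_not]
      exact ⟨fun h => s.iseqv.symm h, fun h => s.iseqv.symm h⟩
  | some x, none =>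
      show pRel _ _ _ ↔ _
      rw [pRel, hsingle, not_not]
  | some x, some y =>
      show pRel _ _ _ ↔ _
      rw [pRel]
      simp only [hsingle, not_not, toMatroid_indep]
      constructor
      · rintro (rfl | ⟨h1, h2⟩ | ⟨h1, h2, h3⟩)
        · exact s.iseqv.refl _
        · exact s.iseqv.trans h1 (s.iseqv.symm h2)
        · by_cases hxy : x = y
          · subst hxy; exact s.iseqv.refl _
          · by_contra hr
            exact h3 (mIndep_pair h1 h2 hr)
      · intro h
        by_cases hx : s.r (some x) none
        · exact Or.inr (Or.inl ⟨hx, s.iseqv.trans (s.iseqv.symm h) hx⟩)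
        · have hy : ¬ s.r (some y) none := fun hy => hx (s.iseqv.trans h hy)
          by_cases hxy : x = y
          · exact Or.inl hxy
          · refine Or.inr (Or.inr ⟨hx, hy, ?_⟩)
            rintro ⟨-, -, h3⟩
            exact h3 (show x ∈ ({x,y} : Set (Fin n)) by simp)
              (show y ∈ ({x,y} : Set (Fin n)) by simp) hxy h

/-- The key bijection. -/
noncomputable def matroidEquiv :
    {M : Matroid (Fin n) // M.E = univ ∧ ∀ B, M.IsBase B → B.ncard = 2} ≃
      {s : Setoid (Option (Fin n)) // ¬ Bad s} where
  toFun M := ⟨toSetoid M.1 M.2.1, toSetoid_not_bad M.2.1 M.2.2⟩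
  invFun s := ⟨toMatroid s.1, toMatroid_E s.1, fun _ h => toMatroid_base_ncard s.2 h⟩
  left_inv M := Subtype.ext (left_roundtrip M.2.1 M.2.2)
  right_inv s := Subtype.ext (right_roundtrip s.2)

end RankTwoCount

/-- The number of labeled rank-2 matroids on a fixed `n`-element ground set is
`b(n+1) - 2^n`. -/
theorem rank_two_matroid_count (n : ℕ) (hn : 2 ≤ n) :
    Nat.card {M : Matroid (Fin n) // M.E = Set.univ ∧ ∀ B, M.IsBase B → B.ncard = 2} =
      bellNum (n + 1) - 2 ^ n := by
  classical
  have e1 : Nat.card {M : Matroid (Fin n) // M.E = Set.univ ∧ ∀ B, M.IsBase B → B.ncard = 2} =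
      Nat.card {s : Setoid (Option (Fin n)) // ¬ RankTwoCount.Bad s} :=
    Nat.card_congr RankTwoCount.matroidEquiv
  have e2 : Nat.card {s : Setoid (Option (Fin n)) // RankTwoCount.Bad s} = 2 ^ n := by
    rw [Nat.card_congr RankTwoCount.badEquiv, Nat.card_eq_fintype_card,
      Fintype.card_set, Fintype.card_fin]
  have e3 : bellNum (n + 1) = Nat.card (Setoid (Option (Fin n))) :=
    Nat.card_congr (RankTwoCount.setoidCongr (finSuccEquiv n))
  have split : Nat.card (Setoid (Option (Fin n))) =
      Nat.card {s : Setoid (Option (Fin n)) // RankTwoCount.Bad s} +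
        Nat.card {s : Setoid (Option (Fin n)) // ¬ RankTwoCount.Bad s} := by
    rw [← Nat.card_sum]
    exact (Nat.card_congr (Equiv.sumCompl _)).symm
  omega
end

section
/- For every natural number n ≥ 2, the number of loopless rank-2 matroids on a fixed n-element ground set equals b(n) − 1, where b(n) denotes the n-th Bell number. -/
open Set

variable {n : ℕ}

def sIndep (s : Setoid (Fin n)) (I : Set (Fin n)) : Prop :=
  I.ncard ≤ 2 ∧ ∀ x ∈ I, ∀ y ∈ I, s x y → x = y

lemma sIndep_insert (s : Setoid (Fin n)) {x y : Fin n} (h : ¬ s x y) :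
    sIndep s (insert x {y}) := by
  constructor
  · exact le_trans (ncard_insert_le _ _) (by simp)
  · intro u hu v hv huv
    simp only [mem_insert_iff, mem_singleton_iff] at hu hv
    rcases hu with rfl | rfl <;> rcases hv with rfl | rfl
    · rfl
    · exact absurd huv h
    · exact absurd (s.iseqv.symm huv) h
    · rfl

noncomputable def matroidOf (s : Setoid (Fin n)) : Matroid (Fin n) :=
  (IndepMatroid.ofFinite (Set.finite_univ) (sIndep s)
    (by constructor <;> simp [sIndep])
    (by
      rintro I J ⟨h1, h2⟩ hIJ
      exact ⟨le_trans (ncard_le_ncard hIJ J.toFinite) h1,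
        fun x hx y hy => h2 x (hIJ hx) y (hIJ hy)⟩)
    (by
      rintro I J ⟨hI1, hI2⟩ ⟨hJ1, hJ2⟩ hlt
      rcases Nat.eq_zero_or_pos I.ncard with h0 | hpos
      · obtain rfl : I = ∅ := (ncard_eq_zero I.toFinite).mp h0
        obtain ⟨e, he⟩ := (ncard_pos J.toFinite).mp (h0 ▸ hlt)
        exact ⟨e, he, by simp, by simpa [sIndep] using hJ2 e he e he⟩
      · have hI1' : I.ncard = 1 := le_antisymm (by omega) hpos
        have hJ2' : J.ncard = 2 := le_antisymm hJ1 (by omega)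
        obtain ⟨a, rfl⟩ := ncard_eq_one.mp hI1'
        obtain ⟨x, y, hxy, rfl⟩ := ncard_eq_two.mp hJ2'
        have hxyr : ¬ s x y := fun h => hxy (hJ2 x (by simp) y (by simp) h)
        have hor : ¬ s x a ∨ ¬ s y a := by
          by_contra h
          push_neg at h
          exact hxyr (s.iseqv.trans h.1 (s.iseqv.symm h.2))
        rcases hor with h | h
        · refine ⟨x, by simp, ?_, sIndep_insert s h⟩
          simp only [mem_singleton_iff]
          rintro rfl
          exact h (s.iseqv.refl x)
        · refine ⟨y, by simp, ?_, sIndep_insert s h⟩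
          simp only [mem_singleton_iff]
          rintro rfl
          exact h (s.iseqv.refl y))
    (fun I _ => subset_univ I)).matroid

@[simp] lemma matroidOf_indep (s : Setoid (Fin n)) (I : Set (Fin n)) :
    (matroidOf s).Indep I ↔ sIndep s I := by
  simp [matroidOf]
  exact Iff.rfl

@[simp] lemma matroidOf_E (s : Setoid (Fin n)) : (matroidOf s).E = univ := rfl

lemma matroidOf_indep_singleton (s : Setoid (Fin n)) (x : Fin n) :
    (matroidOf s).Indep {x} := by
  rw [matroidOf_indep]
  exact ⟨by simp, by simp⟩

lemma matroidOf_base_ncard (s : Setoid (Fin n)) (hs2 : s ≠ ⊤) {B : Set (Fin n)}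
    (hB : (matroidOf s).IsBase B) : B.ncard = 2 := by
  have h := Setoid.eq_top_iff.not.mp hs2
  push_neg at h
  obtain ⟨x, y, hxy⟩ := h
  have hne : x ≠ y := by rintro rfl; exact hxy (s.iseqv.refl x)
  have hind : (matroidOf s).Indep (insert x {y}) := by
    rw [matroidOf_indep]; exact sIndep_insert s hxy
  obtain ⟨B', hB', hsub⟩ := hind.exists_isBase_superset
  have h2 : B'.ncard = 2 := by
    have hle : B'.ncard ≤ 2 := ((matroidOf_indep s B').mp hB'.indep).1
    have hge : 2 ≤ B'.ncard := by
      have := ncard_le_ncard hsub B'.toFinite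
      rwa [ncard_pair hne] at this
    omega
  rw [hB.ncard_eq_ncard_of_isBase hB', h2]

/-- the parallel setoid of a loopless rank ≤ 2 matroid -/
def setoidOf (M : Matroid (Fin n)) (hl : ∀ x : Fin n, M.Indep {x}) : Setoid (Fin n) where
  r x y := x = y ∨ ¬ M.Indep {x, y}
  iseqv := by
    constructor
    · intro x; exact Or.inl rfl
    · rintro x y (rfl | h)
      · exact Or.inl rfl
      · exact Or.inr (by rwa [pair_comm])
    · rintro x y z (rfl | h1) h2
      · exact h2
      · rcases h2 with rfl | h2
        · exact Or.inr h1
        · by_cases hxz : x = z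
          · exact Or.inl hxz
          · refine Or.inr fun hind => ?_
            have h1' : ({y} : Set (Fin n)).encard < ({x, z} : Set (Fin n)).encard := by
              rw [encard_singleton, encard_pair hxz]
              norm_num
            obtain ⟨e, he, hins⟩ := (hl y).augment hind h1'
            simp only [mem_diff, mem_insert_iff, mem_singleton_iff] at he
            rcases he.1 with rfl | rfl
            · exact h1 hins
            · exact h2 (by rwa [pair_comm] at hins)

lemma setoidOf_matroidOf (s : Setoid (Fin n)) :
    setoidOf (matroidOf s) (matroidOf_indep_singleton s) = s := by
  apply Setoid.ext
  intro a b
  show (a = b ∨ ¬ (matroidOf s).Indep {a, b}) ↔ s a b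
  rw [matroidOf_indep]
  constructor
  · rintro (rfl | h)
    · exact s.iseqv.refl a
    · by_contra hab
      exact h (sIndep_insert s hab)
  · intro hab
    by_cases hab' : a = b
    · exact Or.inl hab'
    · exact Or.inr fun h => hab' (h.2 a (by simp) b (by simp) hab)

lemma matroidOf_setoidOf (M : Matroid (Fin n)) (hE : M.E = univ) (hl : ∀ x, M.Indep {x})
    (hb : ∀ B, M.IsBase B → B.ncard = 2) : matroidOf (setoidOf M hl) = M := by
  refine Matroid.ext_indep (by rw [matroidOf_E, hE]) fun I hI => ?_
  rw [matroidOf_indep]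
  constructor
  · rintro ⟨h1, h2⟩
    obtain h0 | h1' | h2' : I.ncard = 0 ∨ I.ncard = 1 ∨ I.ncard = 2 := by omega
    · rw [(ncard_eq_zero I.toFinite).mp h0]; exact M.empty_indep
    · obtain ⟨x, rfl⟩ := ncard_eq_one.mp h1'; exact hl x
    · obtain ⟨x, y, hxy, rfl⟩ := ncard_eq_two.mp h2'
      by_contra hind
      exact hxy (h2 x (by simp) y (by simp) (Or.inr hind))
  · intro hI'
    obtain ⟨B, hB, hsub⟩ := hI'.exists_isBase_superset
    refine ⟨?_, ?_⟩
    · have := ncard_le_ncard hsub B.toFinite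
      rwa [hb B hB] at this
    · intro x hx y hy hrel
      obtain rfl | h := hrel
      · rfl
      · exact absurd (hI'.subset (by
          rintro z hz
          simp only [mem_insert_iff, mem_singleton_iff] at hz
          rcases hz with rfl | rfl
          · exact hx
          · exact hy)) h

lemma setoidOf_ne_top (M : Matroid (Fin n)) (hl : ∀ x, M.Indep {x})
    (hb : ∀ B, M.IsBase B → B.ncard = 2) : setoidOf M hl ≠ ⊤ := by
  obtain ⟨B, hB⟩ := M.exists_isBase
  obtain ⟨x, y, hxy, rfl⟩ := ncard_eq_two.mp (hb B hB)
  intro htop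
  have : (setoidOf M hl) x y := htop ▸ trivial
  obtain rfl | h := this
  · exact hxy rfl
  · exact h hB.indep

lemma matroidOf_ne_top_props (s : Setoid (Fin n)) (hs : s ≠ ⊤) :
    (matroidOf s).E = univ ∧ (∀ x : Fin n, (matroidOf s).Indep {x}) ∧
      ∀ B, (matroidOf s).IsBase B → B.ncard = 2 :=
  ⟨rfl, matroidOf_indep_singleton s, fun _ hB => matroidOf_base_ncard s hs hB⟩

instance : Finite (Setoid (Fin n)) :=
  Finite.of_injective (fun s => s.r) fun s t h => Setoid.ext fun a b => by rw [show s.r = t.r from h]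



/-- The number of labeled loopless rank-2 matroids on a fixed `n`-element ground set is
`b(n) - 1`. -/
theorem loopless_rank_two_matroid_count (n : ℕ) (hn : 2 ≤ n) :
    Nat.card {M : Matroid (Fin n) // M.E = Set.univ ∧ (∀ x : Fin n, M.Indep {x}) ∧
      ∀ B, M.IsBase B → B.ncard = 2} = bellNum n - 1 := by
  have e : {M : Matroid (Fin n) // M.E = Set.univ ∧ (∀ x : Fin n, M.Indep {x}) ∧
      ∀ B, M.IsBase B → B.ncard = 2} ≃ {s : Setoid (Fin n) // s ≠ ⊤} :=
    { toFun := fun p => ⟨setoidOf p.1 p.2.2.1, setoidOf_ne_top p.1 p.2.2.1 p.2.2.2⟩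
      invFun := fun p => ⟨matroidOf p.1, matroidOf_ne_top_props p.1 p.2⟩
      left_inv := fun p => Subtype.ext (matroidOf_setoidOf p.1 p.2.1 p.2.2.1 p.2.2.2)
      right_inv := fun p => Subtype.ext (setoidOf_matroidOf p.1) }
  rw [Nat.card_congr e, bellNum]
  classical
  have : Nat.card {s : Setoid (Fin n) // s ≠ ⊤} = ({⊤}ᶜ : Set (Setoid (Fin n))).ncard := by
    rw [← Nat.card_coe_set_eq]
    congr 1
  rw [this]
  have h := Set.ncard_add_ncard_compl ({⊤} : Set (Setoid (Fin n)))
  rw [ncard_singleton] at h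
  omega
end

section
/- For all natural numbers r and n with 2 < r < n, the number of rank-r paving matroids on a fixed n-element ground set is strictly greater than 2^{C(n,r)/(2n)}, where C(n,r) is the binomial coefficient and the inequality is between real numbers. -/
open Set

namespace SPav

variable {n r : ℕ}

/-- sum of elements of a set, in `ZMod n`. -/
noncomputable def sumZ (n : ℕ) (S : Set (Fin n)) : ZMod n :=
  ∑ x ∈ S.toFinite.toFinset, ((x : ℕ) : ZMod n)

lemma sumZ_insert {S : Set (Fin n)} {e : Fin n} (he : e ∉ S) :
    sumZ n (insert e S) = ((e : ℕ) : ZMod n) + sumZ n S := by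
  classical
  rw [sumZ, sumZ, Set.Finite.toFinset_insert,
    Finset.sum_insert (by simpa using he)]

lemma finCast_inj (hn : 0 < n) {a b : Fin n} (h : ((a : ℕ) : ZMod n) = ((b : ℕ) : ZMod n)) :
    a = b := by
  haveI : NeZero n := ⟨hn.ne'⟩
  have := congrArg ZMod.val h
  rw [ZMod.val_cast_of_lt a.isLt, ZMod.val_cast_of_lt b.isLt] at this
  exact Fin.val_injective this

lemma insert_eq_insert (hn : 0 < n) {I : Set (Fin n)} {e f : Fin n} (he : e ∉ I) (hf : f ∉ I)
    (h : sumZ n (insert e I) = sumZ n (insert f I)) : e = f := by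
  rw [sumZ_insert he, sumZ_insert hf] at h
  exact finCast_inj hn (add_right_cancel h)

end SPav

namespace SPav

lemma exists_matroid (hr : 2 < r) (hrn : r < n) (c : ZMod n)
    (H : Set (Set (Fin n))) (hH : ∀ S ∈ H, S.ncard = r ∧ sumZ n S = c) :
    ∃ M : Matroid (Fin n), M.E = Set.univ ∧
      (∀ I, M.Indep I ↔ (I.ncard ≤ r ∧ I ∉ H)) ∧
      (∀ B, M.IsBase B → B.ncard = r) ∧
      (∀ S : Set (Fin n), S.ncard = r - 1 → M.Indep S) := by
  have hn : 0 < n := by omega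
  set P : Set (Fin n) → Prop := fun I => I.ncard ≤ r ∧ I ∉ H with hP
  have notH_of_lt : ∀ {I : Set (Fin n)}, I.ncard < r → I ∉ H := by
    intro I hlt hIH
    exact absurd (hH I hIH).1 (by omega)
  have hPempty : P ∅ := ⟨by simp, notH_of_lt (by simp; omega)⟩
  have hPsub : ∀ ⦃I J : Set (Fin n)⦄, P J → I ⊆ J → P I := by
    intro I J hJ hIJ
    refine ⟨le_trans (Set.ncard_le_ncard hIJ J.toFinite) hJ.1, fun hIH => ?_⟩
    have hIr : I.ncard = r := (hH I hIH).1
    have : I = J := Set.eq_of_subset_of_ncard_le hIJ (by omega)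
    exact hJ.2 (this ▸ hIH)
  have hPaug : ∀ ⦃I J : Set (Fin n)⦄, P I → P J → I.ncard < J.ncard →
      ∃ e ∈ J, e ∉ I ∧ P (insert e I) := by
    intro I J hI hJ hlt
    by_contra hcon
    push_neg at hcon
    have hins : ∀ e ∈ J, e ∉ I → insert e I ∈ H := by
      intro e heJ heI
      have hc := hcon e heJ heI
      have hle : (insert e I).ncard = I.ncard + 1 := Set.ncard_insert_of_notMem heI
      by_contra hne
      exact hc ⟨by omega, hne⟩
    obtain ⟨e, heJ, heI⟩ := Set.exists_mem_notMem_of_ncard_lt_ncard hlt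
    have heH := hins e heJ heI
    have hcard : (insert e I).ncard = r := (hH _ heH).1
    have hIcard : I.ncard + 1 = r := by
      rw [Set.ncard_insert_of_notMem heI] at hcard; omega
    by_cases hex : ∃ f ∈ J, f ∉ I ∧ f ≠ e
    · obtain ⟨f, hfJ, hfI, hfe⟩ := hex
      have hfH := hins f hfJ hfI
      exact hfe (insert_eq_insert hn hfI heI
        (((hH _ hfH).2).trans ((hH _ heH).2).symm))
    · push_neg at hex
      have hJsub : J ⊆ insert e I := by
        intro x hxJ
        by_cases hxI : x ∈ I
        · exact Set.mem_insert_of_mem _ hxI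
        · exact (hex x hxJ hxI) ▸ Set.mem_insert _ _
      have : J = insert e I := by
        refine Set.eq_of_subset_of_ncard_le hJsub ?_ (Set.toFinite _)
        rw [Set.ncard_insert_of_notMem heI]
        omega
      exact hJ.2 (this ▸ heH)
  refine ⟨(IndepMatroid.ofFinite Set.finite_univ P hPempty hPsub hPaug
      (fun I _ => Set.subset_univ I)).matroid, rfl, fun I => Iff.rfl, ?_, ?_⟩
  · intro B hB
    rw [Matroid.isBase_iff_maximal_indep] at hB
    obtain ⟨hBi, hBmax⟩ := hB
    have hBr : B.ncard ≤ r := hBi.1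
    by_contra hne
    have hBlt : B.ncard < r := by omega
    -- find an element to add
    have : ∃ e, e ∉ B ∧ P (insert e B) := by
      by_cases h1 : B.ncard + 1 < r
      · have : B.ncard < (Set.univ : Set (Fin n)).ncard := by
          rw [Set.ncard_univ, Nat.card_eq_fintype_card, Fintype.card_fin]; omega
        obtain ⟨e, -, heB⟩ := Set.exists_mem_notMem_of_ncard_lt_ncard this
        refine ⟨e, heB, ⟨?_, notH_of_lt ?_⟩⟩ <;>
          rw [Set.ncard_insert_of_notMem heB] <;> omega
      · have h1 : B.ncard + 1 = r := by omega
        have hcompl : 1 < Bᶜ.ncard := by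
          have := Set.ncard_add_ncard_compl B
          rw [Nat.card_eq_fintype_card, Fintype.card_fin] at this
          omega
        obtain ⟨e, f, he, hf, hef⟩ := (Set.one_lt_ncard_iff Bᶜ.toFinite).mp hcompl
        rw [Set.mem_compl_iff] at he hf
        by_cases heH : insert e B ∈ H
        · refine ⟨f, hf, ⟨?_, fun hfH => ?_⟩⟩
          · rw [Set.ncard_insert_of_notMem hf]; omega
          · exact hef (insert_eq_insert hn he hf
              (((hH _ heH).2).trans ((hH _ hfH).2).symm))
        · exact ⟨e, he, ⟨by rw [Set.ncard_insert_of_notMem he]; omega, heH⟩⟩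
    obtain ⟨e, heB, hPe⟩ := this
    have := hBmax hPe (Set.subset_insert e B)
    exact heB (this (Set.mem_insert e B))
  · intro S hS
    exact ⟨by omega, notH_of_lt (by omega)⟩

end SPav

namespace SPav

lemma finiteMatroid (n : ℕ) : Finite (Matroid (Fin n)) := by
  have h := Matroid.finite_setOf_matroid (Set.finite_univ (α := Fin n))
  have h2 : {M : Matroid (Fin n) | M.E ⊆ Set.univ} = Set.univ :=
    Set.eq_univ_of_forall (fun M => Set.subset_univ _)
  rw [h2, Set.finite_univ_iff] at h
  exact h

end SPav

/-- For `2 < r < n`, the number of labeled rank-`r` paving matroids on a fixed `n`-element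
ground set is strictly greater than `2 ^ (C(n,r) / (2n))` (as real numbers). -/
theorem paving_matroid_count_lower_bound (n r : ℕ) (hr : 2 < r) (hrn : r < n) :
    (Nat.card {M : Matroid (Fin n) // M.E = Set.univ ∧ (∀ B, M.IsBase B → B.ncard = r) ∧
        ∀ S : Set (Fin n), S.ncard = r - 1 → M.Indep S} : ℝ) >
      (2 : ℝ) ^ ((n.choose r : ℝ) / (2 * n)) := by
  classical
  have hn : 0 < n := by omega
  haveI : NeZero n := ⟨hn.ne'⟩
  haveI : Nonempty (ZMod n) := ⟨0⟩
  haveI : Finite (Matroid (Fin n)) := SPav.finiteMatroid n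
  set Kc : ZMod n → Finset (Finset (Fin n)) :=
    fun c => (Finset.univ.powersetCard r).filter (fun s => SPav.sumZ n ↑s = c) with hKc
  have hsum : ∑ c : ZMod n, (Kc c).card = n.choose r := by
    rw [← Finset.card_eq_sum_card_fiberwise
      (f := fun s : Finset (Fin n) => SPav.sumZ n (↑s : Set (Fin n)))
      (t := (Finset.univ : Finset (ZMod n))) (fun x _ => Finset.mem_univ _)]
    rw [Finset.card_powersetCard, Finset.card_univ, Fintype.card_fin]
  obtain ⟨c, -, hcmax⟩ := Finset.exists_max_image Finset.univ (fun c => (Kc c).card)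
    Finset.univ_nonempty
  set m := (Kc c).card with hm
  have hmain : n.choose r ≤ n * m := by
    calc n.choose r = ∑ c' : ZMod n, (Kc c').card := hsum.symm
      _ ≤ Finset.univ.card • m :=
          Finset.sum_le_card_nsmul _ _ _ (fun c' _ => hcmax c' (Finset.mem_univ _))
      _ = n * m := by rw [smul_eq_mul, Finset.card_univ, ZMod.card]
  -- the matroid for each subfamily
  have key : ∀ H : Finset (Finset (Fin n)), H ∈ (Kc c).powerset →
      ∃ M : Matroid (Fin n), (M.E = Set.univ ∧ (∀ B, M.IsBase B → B.ncard = r) ∧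
        ∀ S : Set (Fin n), S.ncard = r - 1 → M.Indep S) ∧
        ∀ I : Set (Fin n), M.Indep I ↔ (I.ncard ≤ r ∧
          I ∉ ((fun t : Finset (Fin n) => (↑t : Set (Fin n))) '' ↑H)) := by
    intro H hHmem
    rw [Finset.mem_powerset] at hHmem
    have hHprop : ∀ S ∈ (fun t : Finset (Fin n) => (↑t : Set (Fin n))) '' ↑H,
        S.ncard = r ∧ SPav.sumZ n S = c := by
      rintro S ⟨t, htH, rfl⟩
      have htK := hHmem htH
      rw [hKc, Finset.mem_filter, Finset.mem_powersetCard_univ] at htK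
      exact ⟨by rw [Set.ncard_coe_finset]; exact htK.1, htK.2⟩
    obtain ⟨M, hE, hInd, hBase, hPav⟩ := SPav.exists_matroid hr hrn c
      ((fun t : Finset (Fin n) => (↑t : Set (Fin n))) '' ↑H) hHprop
    exact ⟨M, ⟨hE, hBase, hPav⟩, hInd⟩
  choose f hf1 hf2 using key
  set T := {M : Matroid (Fin n) // M.E = Set.univ ∧ (∀ B, M.IsBase B → B.ncard = r) ∧
      ∀ S : Set (Fin n), S.ncard = r - 1 → M.Indep S} with hT
  set F : {H // H ∈ (Kc c).powerset} → T := fun H => ⟨f H.1 H.2, hf1 H.1 H.2⟩ with hF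
  have hFinj : Function.Injective F := by
    rintro ⟨H1, h1⟩ ⟨H2, h2⟩ hFeq
    have hMeq : f H1 h1 = f H2 h2 := congrArg Subtype.val hFeq
    have himg : ∀ (H1' H2' : Finset (Finset (Fin n))) (h1' : H1' ∈ (Kc c).powerset)
        (h2' : H2' ∈ (Kc c).powerset), f H1' h1' = f H2' h2' →
        (fun t : Finset (Fin n) => (↑t : Set (Fin n))) '' ↑H1' ⊆
          (fun t : Finset (Fin n) => (↑t : Set (Fin n))) '' ↑H2' := by
      intro H1' H2' h1' h2' heq S hS
      by_contra hS2
      obtain ⟨t, htH, rfl⟩ := hS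
      have htK : t ∈ Kc c := (Finset.mem_powerset.mp h1') htH
      have htr : t.card = r := by
        rw [hKc, Finset.mem_filter, Finset.mem_powersetCard_univ] at htK
        exact htK.1
      have hind2 : (f H2' h2').Indep ↑t :=
        (hf2 H2' h2' ↑t).mpr ⟨by rw [Set.ncard_coe_finset, htr], hS2⟩
      have hind1 : (f H1' h1').Indep ↑t := by rw [heq]; exact hind2
      have := ((hf2 H1' h1' ↑t).mp hind1).2
      exact this ⟨t, htH, rfl⟩
    have hseteq : (fun t : Finset (Fin n) => (↑t : Set (Fin n))) '' ↑H1 =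
        (fun t : Finset (Fin n) => (↑t : Set (Fin n))) '' ↑H2 :=
      Set.Subset.antisymm (himg H1 H2 h1 h2 hMeq) (himg H2 H1 h2 h1 hMeq.symm)
    have hcoe : (↑H1 : Set (Finset (Fin n))) = ↑H2 :=
      Set.image_injective.mpr Finset.coe_injective hseteq
    exact Subtype.ext (Finset.coe_injective hcoe)
  have hcount : 2 ^ m ≤ Nat.card T := by
    have h := Nat.card_le_card_of_injective F hFinj
    rwa [Nat.card_eq_finsetCard ((Kc c).powerset), Finset.card_powerset] at h
  -- arithmetic
  have hchoosepos : 0 < n.choose r := Nat.choose_pos hrn.le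
  have hmpos : 0 < m := by
    rcases Nat.eq_zero_or_pos m with h | h
    · rw [h, Nat.mul_zero] at hmain; omega
    · exact h
  have hlt : (n.choose r : ℝ) / (2 * n) < (m : ℝ) := by
    rw [div_lt_iff₀ (by positivity)]
    have h1 : (n.choose r : ℝ) ≤ (n : ℝ) * m := by exact_mod_cast hmain
    have h2 : (0 : ℝ) < (n : ℝ) * m := by positivity
    nlinarith
  calc (2 : ℝ) ^ ((n.choose r : ℝ) / (2 * n))
      < (2 : ℝ) ^ (m : ℝ) := (Real.rpow_lt_rpow_left_iff (by norm_num)).mpr hlt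
    _ = ((2 ^ m : ℕ) : ℝ) := by rw [Real.rpow_natCast]; push_cast; ring
    _ ≤ (Nat.card T : ℝ) := by exact_mod_cast hcount
end

section
/- For every natural number n ≥ 94, the product of the number of loopless rank-1 matroids and the number of loopless rank-3 matroids on a fixed n-element ground set strictly exceeds the square of the number of loopless rank-2 matroids on that set; equivalently, since there is exactly one loopless rank-1 matroid, the number of loopless rank-3 matroids on an n-element set is strictly greater than (b(n) − 1)^2, where b(n) is the n-th Bell number. -/
open Finset

namespace LooplessCount

/-! ### Arithmetic -/

lemma pow2_lin : ∀ k, 7 ≤ k → 12 * k + 16 ≤ 2 ^ k := by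
  intro k hk
  induction k with
  | zero => omega
  | succ m ih =>
    rcases Nat.lt_or_ge m 7 with hm | hm
    · interval_cases m <;> simp_all <;> omega
    · have h1 := ih (by omega)
      have h2 : (12 : ℕ) ≤ 2 ^ m := le_trans (by omega) h1
      have : 2 ^ (m + 1) = 2 ^ m + 2 ^ m := by ring
      omega

lemma log_bound {n : ℕ} (hn : 94 ≤ n) : 12 * (Nat.log 2 n + 1) + 4 ≤ n := by
  set k := Nat.log 2 n with hk
  rcases Nat.lt_or_ge k 7 with h | h
  · omega
  · have h2 : 2 ^ k ≤ n := Nat.pow_log_le_self 2 (by omega)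
    have := pow2_lin k h
    omega

lemma arith {n : ℕ} (hn : 94 ≤ n) : n ^ (12 * n) < 2 ^ (n * (n - 3)) := by
  set ℓ := Nat.log 2 n + 1 with hℓ
  have h1 : n < 2 ^ ℓ := Nat.lt_pow_succ_log_self (by norm_num) n
  have h2 : 12 * ℓ + 4 ≤ n := log_bound hn
  calc n ^ (12 * n) < (2 ^ ℓ) ^ (12 * n) :=
        Nat.pow_lt_pow_left h1 (by omega)
    _ = 2 ^ (ℓ * (12 * n)) := by rw [← pow_mul]
    _ ≤ 2 ^ (n * (n - 3)) := by
        apply Nat.pow_le_pow_right (by norm_num)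
        have h3 : 12 * ℓ ≤ n - 3 := by omega
        calc ℓ * (12 * n) = (12 * ℓ) * n := by ring
          _ ≤ (n - 3) * n := Nat.mul_le_mul_right n h3
          _ = n * (n - 3) := Nat.mul_comm _ _

/-! ### The triple system -/

variable {n : ℕ} [NeZero n]

/-- Triples with zero sum in `Fin n`. -/
def T (n : ℕ) [NeZero n] : Finset (Finset (Fin n)) :=
  Finset.univ.filter (fun t => t.card = 3 ∧ ∑ x ∈ t, x = 0)

lemma mem_T {t : Finset (Fin n)} (ht : t ∈ T n) : t.card = 3 ∧ ∑ x ∈ t, x = 0 := by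
  simpa [T] using ht

/-- A member of `T n` containing two given distinct points is determined. -/
lemma T_third {t : Finset (Fin n)} (ht : t ∈ T n) {a b : Fin n} (hab : a ≠ b)
    (ha : a ∈ t) (hb : b ∈ t) : t = {a, b, -(a + b)} := by
  obtain ⟨hcard, hsum⟩ := mem_T ht
  have hsub : ({a, b} : Finset (Fin n)) ⊆ t := by
    intro x hx; simp only [mem_insert, mem_singleton] at hx; rcases hx with rfl | rfl <;> assumption
  have hab2 : ({a, b} : Finset (Fin n)).card = 2 := by
    rw [card_insert_of_notMem (fun h => hab (Finset.mem_singleton.1 h)), card_singleton]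
  have hsd : (t \ {a, b}).card = 1 := by
    rw [card_sdiff_of_subset hsub, hcard, hab2]
  obtain ⟨c, hc⟩ := Finset.card_eq_one.1 hsd
  have hct : c ∈ t ∧ c ∉ ({a, b} : Finset (Fin n)) := by
    have : c ∈ t \ {a, b} := hc ▸ mem_singleton_self c
    simpa [Finset.mem_sdiff] using this
  have hca : c ≠ a := fun h => hct.2 (by simp [h])
  have hcb : c ≠ b := fun h => hct.2 (by simp [h])
  have hna : a ∉ ({b, c} : Finset (Fin n)) := by
    simp only [mem_insert, mem_singleton]
    push_neg
    exact ⟨hab, hca.symm⟩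
  have hnb : b ∉ ({c} : Finset (Fin n)) := by
    simp only [mem_singleton]
    exact hcb.symm
  have hc3 : ({a, b, c} : Finset (Fin n)).card = 3 := by
    rw [card_insert_of_notMem hna, card_insert_of_notMem hnb, card_singleton]
  have ht' : t = {a, b, c} := by
    refine (Finset.eq_of_subset_of_card_le ?_ ?_).symm
    · intro x hx
      simp only [mem_insert, mem_singleton] at hx
      rcases hx with rfl | rfl | rfl
      · exact ha
      · exact hb
      · exact hct.1
    · rw [hcard, hc3]
  have hsum' : a + b + c = 0 := by
    rw [ht'] at hsum
    rw [Finset.sum_insert (by simp [hab, hca.symm]), Finset.sum_insert (by simp [hcb.symm]),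
      Finset.sum_singleton] at hsum
    rw [← add_assoc] at hsum
    exact hsum
  have : c = -(a + b) := by
    have := eq_neg_of_add_eq_zero_right hsum'
    exact this
  rw [ht', this]

lemma T_steiner {t₁ t₂ : Finset (Fin n)} (h₁ : t₁ ∈ T n) (h₂ : t₂ ∈ T n)
    {a b : Fin n} (hab : a ≠ b) (ha₁ : a ∈ t₁) (hb₁ : b ∈ t₁) (ha₂ : a ∈ t₂) (hb₂ : b ∈ t₂) :
    t₁ = t₂ := by
  rw [T_third h₁ hab ha₁ hb₁, T_third h₂ hab ha₂ hb₂]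

/-! ### Counting `T` -/

def D (n : ℕ) [NeZero n] : Finset (Fin n × Fin n) :=
  (Finset.univ ×ˢ Finset.univ).filter
    (fun p => p.1 ≠ p.2 ∧ p.1 ≠ -(p.1 + p.2) ∧ p.2 ≠ -(p.1 + p.2))

def tripleOf (p : Fin n × Fin n) : Finset (Fin n) := {p.1, p.2, -(p.1 + p.2)}

lemma tripleOf_mem_T {p : Fin n × Fin n} (hp : p ∈ D n) : tripleOf p ∈ T n := by
  obtain ⟨h12, h13, h23⟩ : p.1 ≠ p.2 ∧ p.1 ≠ -(p.1 + p.2) ∧ p.2 ≠ -(p.1 + p.2) :=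
    (mem_filter.1 hp).2
  have hne1 : p.1 ∉ ({p.2, -(p.1 + p.2)} : Finset (Fin n)) := by
    simp only [mem_insert, mem_singleton]
    push_neg
    exact ⟨h12, h13⟩
  have hne2 : p.2 ∉ ({-(p.1 + p.2)} : Finset (Fin n)) := by
    simp only [mem_singleton]
    exact h23
  have hcard : (tripleOf p).card = 3 := by
    rw [tripleOf, card_insert_of_notMem hne1, card_insert_of_notMem hne2, card_singleton]
  have hsum : ∑ x ∈ tripleOf p, x = 0 := by
    rw [tripleOf, Finset.sum_insert hne1, Finset.sum_insert hne2, Finset.sum_singleton]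
    abel
  simp [T, hcard, hsum]

lemma D_card : n * n - 3 * n ≤ (D n).card := by
  classical
  set s := (Finset.univ ×ˢ Finset.univ : Finset (Fin n × Fin n)) with hs
  have htot : s.card = n * n := by simp [hs]
  have hsub : s ⊆ ((D n ∪ s.filter (fun p => p.1 = p.2)) ∪ s.filter (fun p => p.1 = -(p.1 + p.2)))
      ∪ s.filter (fun p => p.2 = -(p.1 + p.2)) := by
    intro p hp
    simp only [Finset.mem_union, mem_filter]
    by_cases h1 : p.1 = p.2
    · exact Or.inl (Or.inl (Or.inr ⟨hp, h1⟩))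
    by_cases h2 : p.1 = -(p.1 + p.2)
    · exact Or.inl (Or.inr ⟨hp, h2⟩)
    by_cases h3 : p.2 = -(p.1 + p.2)
    · exact Or.inr ⟨hp, h3⟩
    · refine Or.inl (Or.inl (Or.inl ?_))
      rw [D, mem_filter]
      exact ⟨hp, h1, h2, h3⟩
  have h1 : (s.filter (fun p => p.1 = p.2)).card ≤ n := by
    have := Finset.card_le_card_of_injOn (f := Prod.fst)
      (s := s.filter (fun p => p.1 = p.2)) (t := Finset.univ)
      (fun p _ => mem_univ _)
      (fun p hp q hq h => by
        rw [mem_coe, mem_filter] at hp hq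
        exact Prod.ext h (by rw [← hp.2, ← hq.2, h]))
    simpa using this
  have h2 : (s.filter (fun p => p.1 = -(p.1 + p.2))).card ≤ n := by
    have := Finset.card_le_card_of_injOn (f := Prod.fst)
      (s := s.filter (fun p => p.1 = -(p.1 + p.2))) (t := Finset.univ)
      (fun p _ => mem_univ _)
      (fun p hp q hq h => by
        rw [mem_coe, mem_filter] at hp hq
        have hneg : -(p.1 + p.2) = -(q.1 + q.2) := by rw [← hp.2, ← hq.2, h]
        have hsum : p.1 + p.2 = q.1 + q.2 := neg_inj.1 hneg
        rw [h] at hsum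
        exact Prod.ext h (add_left_cancel hsum))
    simpa using this
  have h3 : (s.filter (fun p => p.2 = -(p.1 + p.2))).card ≤ n := by
    have := Finset.card_le_card_of_injOn (f := Prod.snd)
      (s := s.filter (fun p => p.2 = -(p.1 + p.2))) (t := Finset.univ)
      (fun p _ => mem_univ _)
      (fun p hp q hq h => by
        rw [mem_coe, mem_filter] at hp hq
        have hneg : -(p.1 + p.2) = -(q.1 + q.2) := by rw [← hp.2, ← hq.2, h]
        have hsum : p.1 + p.2 = q.1 + q.2 := neg_inj.1 hneg
        rw [h] at hsum
        exact Prod.ext (add_right_cancel hsum) h)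
    simpa using this
  have hchain : s.card ≤ (D n).card + n + n + n := by
    calc s.card ≤ _ := Finset.card_le_card hsub
      _ ≤ ((D n ∪ s.filter (fun p => p.1 = p.2)) ∪ s.filter (fun p => p.1 = -(p.1 + p.2))).card
          + (s.filter (fun p => p.2 = -(p.1 + p.2))).card := Finset.card_union_le _ _
      _ ≤ (D n ∪ s.filter (fun p => p.1 = p.2)).card
          + (s.filter (fun p => p.1 = -(p.1 + p.2))).card
          + (s.filter (fun p => p.2 = -(p.1 + p.2))).card := by
            have := Finset.card_union_le (D n ∪ s.filter (fun p => p.1 = p.2))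
              (s.filter (fun p => p.1 = -(p.1 + p.2)))
            omega
      _ ≤ (D n).card + n + n + n := by
            have := Finset.card_union_le (D n) (s.filter (fun p => p.1 = p.2))
            omega
  omega

lemma T_card_lb : n * n - 3 * n ≤ 6 * (T n).card := by
  classical
  have himg : (D n).image tripleOf ⊆ T n := by
    intro t ht
    obtain ⟨p, hp, rfl⟩ := Finset.mem_image.1 ht
    exact tripleOf_mem_T hp
  have hfib : ∀ t ∈ (D n).image tripleOf,
      ((D n).filter (fun p => tripleOf p = t)).card ≤ 6 := by
    intro t ht
    have htT := himg ht
    have htc : t.card = 3 := (mem_T htT).1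
    have hsub : (D n).filter (fun p => tripleOf p = t) ⊆ t.offDiag := by
      intro p hp
      rw [mem_filter] at hp
      obtain ⟨hpD, hpt⟩ := hp
      have h12 : p.1 ≠ p.2 := ((mem_filter.1 hpD).2).1
      have h1 : p.1 ∈ t := by rw [← hpt]; simp [tripleOf]
      have h2 : p.2 ∈ t := by rw [← hpt]; simp [tripleOf]
      exact Finset.mem_offDiag.2 ⟨h1, h2, h12⟩
    calc _ ≤ t.offDiag.card := Finset.card_le_card hsub
      _ = 6 := by rw [Finset.offDiag_card, htc]
  have := Finset.card_le_mul_card_image (f := tripleOf) (D n) 6 hfib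
  have himgc : ((D n).image tripleOf).card ≤ (T n).card := Finset.card_le_card himg
  have := D_card (n := n)
  omega



/-! ### Sparse paving rank-3 matroids -/

def SpIndep (S : Finset (Finset (Fin n))) (X : Set (Fin n)) : Prop :=
  X.ncard ≤ 3 ∧ ∀ t ∈ S, (t : Set (Fin n)) ≠ X

lemma sp_pair_unique {S : Finset (Finset (Fin n))} (hS : S ⊆ T n) {I : Set (Fin n)}
    (hI : I.ncard = 2) {e₁ e₂ : Fin n} (he : e₁ ≠ e₂) (h1 : e₁ ∉ I) (h2 : e₂ ∉ I)
    {t₁ t₂ : Finset (Fin n)} (ht₁ : t₁ ∈ S) (ht₂ : t₂ ∈ S)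
    (hc₁ : (t₁ : Set (Fin n)) = insert e₁ I) (hc₂ : (t₂ : Set (Fin n)) = insert e₂ I) :
    False := by
  obtain ⟨a, b, hab, rfl⟩ := Set.ncard_eq_two.1 hI
  have ha₁ : a ∈ t₁ := by
    rw [← Finset.mem_coe, hc₁]; exact Set.mem_insert_of_mem _ (by simp)
  have hb₁ : b ∈ t₁ := by
    rw [← Finset.mem_coe, hc₁]; exact Set.mem_insert_of_mem _ (by simp)
  have ha₂ : a ∈ t₂ := by
    rw [← Finset.mem_coe, hc₂]; exact Set.mem_insert_of_mem _ (by simp)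
  have hb₂ : b ∈ t₂ := by
    rw [← Finset.mem_coe, hc₂]; exact Set.mem_insert_of_mem _ (by simp)
  have heq : t₁ = t₂ := T_steiner (hS ht₁) (hS ht₂) hab ha₁ hb₁ ha₂ hb₂
  have he₁ : e₁ ∈ (t₁ : Set (Fin n)) := by rw [hc₁]; exact Set.mem_insert _ _
  rw [heq, hc₂] at he₁
  rcases he₁ with h | h
  · exact he h
  · exact h1 h

lemma sp_empty {S : Finset (Finset (Fin n))} (hS : S ⊆ T n) : SpIndep S ∅ := by
  refine ⟨by simp, fun t ht h => ?_⟩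
  have := (mem_T (hS ht)).1
  rw [Finset.coe_eq_empty.1 h] at this
  simp at this

lemma sp_subset {S : Finset (Finset (Fin n))} (hS : S ⊆ T n) {I J : Set (Fin n)}
    (hJ : SpIndep S J) (hIJ : I ⊆ J) : SpIndep S I := by
  refine ⟨le_trans (Set.ncard_le_ncard hIJ (Set.toFinite J)) hJ.1, fun t ht h => ?_⟩
  have h3 : I.ncard = 3 := by rw [← h, Set.ncard_coe_finset, (mem_T (hS ht)).1]
  have hJ1 := hJ.1
  have hIJ' : I = J := Set.eq_of_subset_of_ncard_le hIJ (by omega) (Set.toFinite J)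
  exact hJ.2 t ht (h.trans hIJ')

lemma sp_aug {S : Finset (Finset (Fin n))} (hS : S ⊆ T n) {I J : Set (Fin n)}
    (hI : SpIndep S I) (hJ : SpIndep S J) (hlt : I.ncard < J.ncard) :
    ∃ e ∈ J, e ∉ I ∧ SpIndep S (insert e I) := by
  have hnotsub : ¬ J ⊆ I := fun h =>
    absurd (Set.ncard_le_ncard h (Set.toFinite I)) (by omega)
  by_cases hI2 : I.ncard ≤ 1
  · obtain ⟨e, heJ, heI⟩ := Set.not_subset.1 hnotsub
    have hins : (insert e I).ncard ≤ 2 :=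
      le_trans (Set.ncard_insert_le e I) (by omega)
    exact ⟨e, heJ, heI, le_trans hins (by omega), fun t ht h => by
      have h3 : (insert e I).ncard = 3 := by
        rw [← h, Set.ncard_coe_finset, (mem_T (hS ht)).1]
      omega⟩
  · have hI2' : I.ncard = 2 := by
      have := hJ.1
      omega
    by_contra hcon
    push_neg at hcon
    have key : ∀ e, e ∈ J → e ∉ I → ∃ t ∈ S, (t : Set (Fin n)) = insert e I := by
      intro e heJ heI
      have hnc : (insert e I).ncard ≤ 3 := by
        rw [Set.ncard_insert_of_notMem heI (Set.toFinite I)]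
        omega
      have h' := hcon e heJ heI
      rw [SpIndep] at h'
      push_neg at h'
      exact h' hnc
    have hJ3 : J.ncard = 3 := by
      have := hJ.1
      omega
    by_cases hIJ : I ⊆ J
    · obtain ⟨e, heJ, heI⟩ := Set.not_subset.1 hnotsub
      obtain ⟨t, ht, hte⟩ := key e heJ heI
      have hinsJ : insert e I = J := by
        apply Set.eq_of_subset_of_ncard_le (Set.insert_subset heJ hIJ)
        rw [Set.ncard_insert_of_notMem heI (Set.toFinite I)]
        omega
      exact hJ.2 t ht (hte.trans hinsJ)
    · obtain ⟨x, hxI, hxJ⟩ := Set.not_subset.1 hIJ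
      have hJI : (J ∩ I).ncard ≤ 1 := by
        have hss : J ∩ I ⊂ I :=
          ⟨Set.inter_subset_right, fun h => hxJ (Set.mem_of_mem_inter_left (h hxI))⟩
        have := Set.ncard_lt_ncard hss (Set.toFinite I)
        omega
      have hdiff : 2 ≤ (J \ I).ncard := by
        have := Set.ncard_inter_add_ncard_diff_eq_ncard J I (Set.toFinite J)
        omega
      obtain ⟨e₁, he₁, e₂, he₂, hne⟩ := (Set.one_lt_ncard (s := J \ I) (Set.toFinite _)).1 (by omega)
      obtain ⟨t₁, ht₁, h₁⟩ := key e₁ he₁.1 he₁.2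
      obtain ⟨t₂, ht₂, h₂⟩ := key e₂ he₂.1 he₂.2
      exact sp_pair_unique hS hI2' hne he₁.2 he₂.2 ht₁ ht₂ h₁ h₂

def spM (S : Finset (Finset (Fin n))) (hS : S ⊆ T n) : Matroid (Fin n) :=
  (IndepMatroid.ofFinite Set.finite_univ (SpIndep S) (sp_empty hS)
    (fun _ _ hJ hIJ => sp_subset hS hJ hIJ)
    (fun _ _ hI hJ hlt => sp_aug hS hI hJ hlt)
    (fun I _ => Set.subset_univ I)).matroid

lemma spM_E {S : Finset (Finset (Fin n))} (hS : S ⊆ T n) : (spM S hS).E = Set.univ := by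
  simp [spM]

lemma spM_indep {S : Finset (Finset (Fin n))} (hS : S ⊆ T n) {X : Set (Fin n)} :
    (spM S hS).Indep X ↔ SpIndep S X := by
  simp [spM]

lemma spM_loopless {S : Finset (Finset (Fin n))} (hS : S ⊆ T n) (x : Fin n) :
    (spM S hS).Indep {x} := by
  rw [spM_indep hS]
  refine ⟨by simp, fun t ht h => ?_⟩
  have := (mem_T (hS ht)).1
  rw [Finset.coe_eq_singleton.1 h] at this
  simp at this

lemma sp_insert {S : Finset (Finset (Fin n))} (hS : S ⊆ T n) (hn : 5 ≤ n)
    {B : Set (Fin n)} (hB : SpIndep S B) (hlt : B.ncard ≤ 2) :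
    ∃ e, e ∉ B ∧ SpIndep S (insert e B) := by
  have huniv : (Set.univ : Set (Fin n)).ncard = n := by
    rw [Set.ncard_univ, Nat.card_eq_fintype_card, Fintype.card_fin]
  have hnotsub : ¬ (Set.univ : Set (Fin n)) ⊆ B := fun h =>
    absurd (Set.ncard_le_ncard h (Set.toFinite B)) (by omega)
  by_cases hB1 : B.ncard ≤ 1
  · obtain ⟨e, _, heB⟩ := Set.not_subset.1 hnotsub
    have hins : (insert e B).ncard ≤ 2 := le_trans (Set.ncard_insert_le e B) (by omega)
    exact ⟨e, heB, le_trans hins (by omega), fun t ht h => by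
      have h3 : (insert e B).ncard = 3 := by
        rw [← h, Set.ncard_coe_finset, (mem_T (hS ht)).1]
      omega⟩
  · have hB2 : B.ncard = 2 := by omega
    by_contra hcon
    push_neg at hcon
    have key : ∀ e, e ∉ B → ∃ t ∈ S, (t : Set (Fin n)) = insert e B := by
      intro e heB
      have hnc : (insert e B).ncard ≤ 3 := by
        rw [Set.ncard_insert_of_notMem heB (Set.toFinite B)]
        omega
      have h' := hcon e heB
      rw [SpIndep] at h'
      push_neg at h'
      exact h' hnc
    have hdiff : 2 ≤ (Set.univ \ B).ncard := by
      have := Set.ncard_inter_add_ncard_diff_eq_ncard Set.univ B (Set.toFinite _)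
      rw [Set.univ_inter] at this
      omega
    obtain ⟨e₁, he₁, e₂, he₂, hne⟩ := (Set.one_lt_ncard (s := Set.univ \ B) (Set.toFinite _)).1 (by omega)
    obtain ⟨t₁, ht₁, h₁⟩ := key e₁ he₁.2
    obtain ⟨t₂, ht₂, h₂⟩ := key e₂ he₂.2
    exact sp_pair_unique hS hB2 hne he₁.2 he₂.2 ht₁ ht₂ h₁ h₂

lemma spM_base {S : Finset (Finset (Fin n))} (hS : S ⊆ T n) (hn : 5 ≤ n)
    {B : Set (Fin n)} (hB : (spM S hS).IsBase B) : B.ncard = 3 := by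
  have hBi := (spM_indep hS).1 hB.indep
  by_contra hne
  have hlt : B.ncard ≤ 2 := by
    have := hBi.1
    omega
  obtain ⟨e, heB, hins⟩ := sp_insert hS hn hBi hlt
  have : B = insert e B :=
    hB.eq_of_subset_indep ((spM_indep hS).2 hins) (Set.subset_insert e B)
  exact heB (this ▸ Set.mem_insert e B)

lemma spM_inj_aux {S₁ S₂ : Finset (Finset (Fin n))} (h₁ : S₁ ⊆ T n) (h₂ : S₂ ⊆ T n)
    (h : spM S₁ h₁ = spM S₂ h₂) : S₁ ⊆ S₂ := by
  intro t ht
  have hdep : ¬ (spM S₁ h₁).Indep (t : Set (Fin n)) := fun hi =>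
    ((spM_indep h₁).1 hi).2 t ht rfl
  rw [h, spM_indep h₂] at hdep
  rw [SpIndep] at hdep
  push_neg at hdep
  have h3 : (t : Set (Fin n)).ncard ≤ 3 := by
    rw [Set.ncard_coe_finset, (mem_T (h₁ ht)).1]
  obtain ⟨t', ht', htt⟩ := hdep h3
  rwa [← Finset.coe_injective htt]

lemma spM_inj {S₁ S₂ : Finset (Finset (Fin n))} (h₁ : S₁ ⊆ T n) (h₂ : S₂ ⊆ T n)
    (h : spM S₁ h₁ = spM S₂ h₂) : S₁ = S₂ :=
  subset_antisymm (spM_inj_aux h₁ h₂ h) (spM_inj_aux h₂ h₁ h.symm)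



/-! ### Rank-2 matroids are determined by their parallel classes -/

def PRel (M : Matroid (Fin n)) (a b : Fin n) : Prop := a = b ∨ ¬ M.Indep {a, b}

open Classical in
noncomputable def pfun (M : Matroid (Fin n)) (i : Fin n) : Fin n :=
  (Finset.univ.filter (fun j => PRel M i j)).min' ⟨i, Finset.mem_filter.2 ⟨Finset.mem_univ _, Or.inl rfl⟩⟩

lemma indep_ncard_le_two {M : Matroid (Fin n)} (hr : ∀ B, M.IsBase B → B.ncard = 2)
    {I : Set (Fin n)} (hI : M.Indep I) : I.ncard ≤ 2 := by
  obtain ⟨B, hB, hIB⟩ := hI.exists_isBase_superset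
  calc I.ncard ≤ B.ncard := Set.ncard_le_ncard hIB (Set.toFinite B)
    _ = 2 := hr B hB

lemma prel_symm {M : Matroid (Fin n)} {a b : Fin n} (h : PRel M a b) : PRel M b a := by
  rcases h with h | h
  · exact Or.inl h.symm
  · exact Or.inr (by rwa [Set.pair_comm])

lemma prel_trans {M : Matroid (Fin n)} (hl : ∀ x : Fin n, M.Indep {x})
    {a b c : Fin n} (hab : PRel M a b) (hbc : PRel M b c) : PRel M a c := by
  rcases hab with rfl | hab
  · exact hbc
  rcases hbc with rfl | hbc
  · exact Or.inr hab
  by_cases hac : a = c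
  · exact Or.inl hac
  refine Or.inr fun hind => ?_
  obtain ⟨e, he, hei⟩ := (hl b).augment hind (by
    rw [Set.encard_singleton, Set.encard_pair hac]
    norm_num)
  have he1 : e = a ∨ e = c := by
    have := he.1
    simpa using this
  rcases he1 with rfl | rfl
  · exact hab hei
  · rw [Set.pair_comm] at hei
    exact hbc hei

open Classical in
lemma pfun_prel (M : Matroid (Fin n)) (i : Fin n) : PRel M i (pfun M i) := by
  unfold pfun
  exact (Finset.mem_filter.1 (Finset.min'_mem _ _)).2

open Classical in
lemma pfun_eq_of_prel {M : Matroid (Fin n)} (hl : ∀ x : Fin n, M.Indep {x})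
    {a b : Fin n} (h : PRel M a b) : pfun M a = pfun M b := by
  have h1 : pfun M b ∈ Finset.univ.filter (fun j => PRel M a j) := by
    rw [Finset.mem_filter]
    exact ⟨Finset.mem_univ _, prel_trans hl h (pfun_prel M b)⟩
  have h2 : pfun M a ∈ Finset.univ.filter (fun j => PRel M b j) := by
    rw [Finset.mem_filter]
    exact ⟨Finset.mem_univ _, prel_trans hl (prel_symm h) (pfun_prel M a)⟩
  apply le_antisymm
  · conv_lhs => unfold pfun
    exact Finset.min'_le _ _ h1
  · conv_lhs => unfold pfun
    exact Finset.min'_le _ _ h2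

lemma prel_of_pfun_eq {M : Matroid (Fin n)} (hl : ∀ x : Fin n, M.Indep {x})
    {a b : Fin n} (h : pfun M a = pfun M b) : PRel M a b :=
  prel_trans hl (h ▸ pfun_prel M a) (prel_symm (pfun_prel M b))

lemma rank2_pfun_inj {M M' : Matroid (Fin n)}
    (hE : M.E = Set.univ) (hl : ∀ x : Fin n, M.Indep {x}) (hr : ∀ B, M.IsBase B → B.ncard = 2)
    (hE' : M'.E = Set.univ) (hl' : ∀ x : Fin n, M'.Indep {x})
    (hr' : ∀ B, M'.IsBase B → B.ncard = 2)
    (h : pfun M = pfun M') : M = M' := by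
  have hpair : ∀ a b : Fin n, M.Indep {a, b} ↔ M'.Indep {a, b} := by
    intro a b
    by_cases hab : a = b
    · subst hab
      rw [Set.pair_eq_singleton]
      exact iff_of_true (hl a) (hl' a)
    · have hrel : PRel M a b ↔ PRel M' a b := by
        constructor
        · intro hR
          apply prel_of_pfun_eq hl'
          rw [← congrFun h a, ← congrFun h b]
          exact pfun_eq_of_prel hl hR
        · intro hR
          apply prel_of_pfun_eq hl
          rw [congrFun h a, congrFun h b]
          exact pfun_eq_of_prel hl' hR
      constructor
      · intro hind
        by_contra hind'
        rcases hrel.2 (Or.inr hind') with h' | h'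
        · exact hab h'
        · exact h' hind
      · intro hind
        by_contra hind'
        rcases hrel.1 (Or.inr hind') with h' | h'
        · exact hab h'
        · exact h' hind
  have main : ∀ (N N' : Matroid (Fin n)), (∀ x : Fin n, N'.Indep {x}) →
      (∀ B, N.IsBase B → B.ncard = 2) →
      (∀ a b : Fin n, N.Indep {a, b} → N'.Indep {a, b}) →
      ∀ I, N.Indep I → N'.Indep I := by
    intro N N' hl2 hr2 hp I hI
    have hc := indep_ncard_le_two hr2 hI
    interval_cases hcard : I.ncard
    · rw [(Set.ncard_eq_zero (Set.toFinite I)).1 hcard]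
      exact N'.empty_indep
    · obtain ⟨a, rfl⟩ := Set.ncard_eq_one.1 hcard
      exact hl2 a
    · obtain ⟨a, b, hab, rfl⟩ := Set.ncard_eq_two.1 hcard
      exact hp a b hI
  apply Matroid.ext_indep (hE.trans hE'.symm)
  intro I _
  exact ⟨main M M' hl' hr (fun a b => (hpair a b).1) I,
    main M' M hl hr' (fun a b => (hpair a b).2) I⟩

/-! ### The unique loopless rank-1 matroid -/

def oneM (n : ℕ) : Matroid (Fin n) :=
  (IndepMatroid.ofFinite Set.finite_univ (fun X => X.ncard ≤ 1)
    (by simp)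
    (fun I J hJ hIJ => le_trans (Set.ncard_le_ncard hIJ (Set.toFinite J)) hJ)
    (fun I J hI hJ hlt => by
      have h0 : I = ∅ := (Set.ncard_eq_zero (Set.toFinite I)).1 (by omega)
      obtain ⟨e, he⟩ := Set.nonempty_of_ncard_ne_zero (show J.ncard ≠ 0 by omega)
      exact ⟨e, he, by simp [h0], by simp [h0]⟩)
    (fun I _ => Set.subset_univ I)).matroid

lemma oneM_E : (oneM n).E = Set.univ := by simp [oneM]

lemma oneM_indep {X : Set (Fin n)} : (oneM n).Indep X ↔ X.ncard ≤ 1 := by simp [oneM]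

lemma oneM_loopless (x : Fin n) : (oneM n).Indep {x} := oneM_indep.2 (by simp)

lemma oneM_base [NeZero n] {B : Set (Fin n)} (hB : (oneM n).IsBase B) : B.ncard = 1 := by
  have hBi : B.ncard ≤ 1 := oneM_indep.1 hB.indep
  by_contra hne
  have h0 : B = ∅ := (Set.ncard_eq_zero (Set.toFinite B)).1 (by omega)
  have hs : (oneM n).Indep {(0 : Fin n)} := oneM_loopless 0
  have : B = {(0 : Fin n)} := hB.eq_of_subset_indep hs (by rw [h0]; exact Set.empty_subset _)
  rw [this, Set.ncard_singleton] at hne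
  exact hne rfl

/-! ### Finiteness -/

instance : Finite (Matroid (Fin n)) := by
  have hinj : Function.Injective (fun M : Matroid (Fin n) => (M.E, M.Indep)) := by
    intro M M' h
    rw [Prod.mk.injEq] at h
    exact Matroid.ext_indep h.1 (fun I _ => by rw [h.2])
  exact Finite.of_injective _ hinj

end LooplessCount

/-- For `n ≥ 94`, the product of the numbers of labeled loopless rank-1 and rank-3
matroids on a fixed `n`-element ground set strictly exceeds the square of the number of
labeled loopless rank-2 matroids on that set. -/
theorem loopless_matroid_count_log_convex_start (n : ℕ) (hn : 94 ≤ n) :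
    Nat.card {M : Matroid (Fin n) // M.E = Set.univ ∧ (∀ x : Fin n, M.Indep {x}) ∧
        ∀ B, M.IsBase B → B.ncard = 1} *
      Nat.card {M : Matroid (Fin n) // M.E = Set.univ ∧ (∀ x : Fin n, M.Indep {x}) ∧
        ∀ B, M.IsBase B → B.ncard = 3} >
      Nat.card {M : Matroid (Fin n) // M.E = Set.univ ∧ (∀ x : Fin n, M.Indep {x}) ∧
        ∀ B, M.IsBase B → B.ncard = 2} ^ 2 := by
  haveI : NeZero n := ⟨by omega⟩
  -- rank 1 : at least one matroid
  have h1 : 0 < Nat.card {M : Matroid (Fin n) // M.E = Set.univ ∧ (∀ x : Fin n, M.Indep {x}) ∧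
      ∀ B, M.IsBase B → B.ncard = 1} := by
    have hne : Nonempty {M : Matroid (Fin n) // M.E = Set.univ ∧ (∀ x : Fin n, M.Indep {x}) ∧
        ∀ B, M.IsBase B → B.ncard = 1} :=
      ⟨⟨LooplessCount.oneM n, LooplessCount.oneM_E, LooplessCount.oneM_loopless,
        fun _ hB => LooplessCount.oneM_base hB⟩⟩
    exact Nat.card_pos
  -- rank 2 : at most n ^ n matroids
  have h2 : Nat.card {M : Matroid (Fin n) // M.E = Set.univ ∧ (∀ x : Fin n, M.Indep {x}) ∧
      ∀ B, M.IsBase B → B.ncard = 2} ≤ n ^ n := by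
    have hinj : Function.Injective
        (fun M : {M : Matroid (Fin n) // M.E = Set.univ ∧ (∀ x : Fin n, M.Indep {x}) ∧
          ∀ B, M.IsBase B → B.ncard = 2} => LooplessCount.pfun M.1) := by
      intro M M' hMM
      exact Subtype.ext (LooplessCount.rank2_pfun_inj M.2.1 M.2.2.1 M.2.2.2
        M'.2.1 M'.2.2.1 M'.2.2.2 hMM)
    calc Nat.card _ ≤ Nat.card (Fin n → Fin n) := Nat.card_le_card_of_injective _ hinj
      _ = n ^ n := by
          rw [Nat.card_eq_fintype_card, Fintype.card_fun, Fintype.card_fin]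
  -- rank 3 : at least 2 ^ |T n| matroids
  have h3 : 2 ^ (LooplessCount.T n).card ≤
      Nat.card {M : Matroid (Fin n) // M.E = Set.univ ∧ (∀ x : Fin n, M.Indep {x}) ∧
        ∀ B, M.IsBase B → B.ncard = 3} := by
    have hmap : ∀ S : {S : Finset (Finset (Fin n)) // S ∈ (LooplessCount.T n).powerset},
        S.1 ⊆ LooplessCount.T n := fun S => Finset.mem_powerset.1 S.2
    have hinj : Function.Injective
        (fun S : {S : Finset (Finset (Fin n)) // S ∈ (LooplessCount.T n).powerset} =>
          (⟨LooplessCount.spM S.1 (hmap S), LooplessCount.spM_E (hmap S),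
            LooplessCount.spM_loopless (hmap S),
            fun _ hB => LooplessCount.spM_base (hmap S) (by omega) hB⟩ :
            {M : Matroid (Fin n) // M.E = Set.univ ∧ (∀ x : Fin n, M.Indep {x}) ∧
              ∀ B, M.IsBase B → B.ncard = 3})) := by
      intro S S' hSS
      exact Subtype.ext (LooplessCount.spM_inj (hmap S) (hmap S')
        (congrArg Subtype.val hSS))
    calc 2 ^ (LooplessCount.T n).card
        = Nat.card {S : Finset (Finset (Fin n)) // S ∈ (LooplessCount.T n).powerset} := by
          rw [Nat.card_eq_fintype_card, Fintype.card_coe, Finset.card_powerset]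
      _ ≤ _ := Nat.card_le_card_of_injective _ hinj
  -- the key numeric inequality
  have hTle : n * (n - 3) ≤ 6 * (LooplessCount.T n).card := by
    have hlb := LooplessCount.T_card_lb (n := n)
    have hsplit : n * (n - 3) + 3 * n = n * n := by
      have h3n : (n - 3) + 3 = n := by omega
      calc n * (n - 3) + 3 * n = n * ((n - 3) + 3) := by ring
        _ = n * n := by rw [h3n]
    omega
  have key : n ^ (2 * n) < 2 ^ (LooplessCount.T n).card := by
    have h6 : (n ^ (2 * n)) ^ 6 < (2 ^ (LooplessCount.T n).card) ^ 6 := by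
      calc (n ^ (2 * n)) ^ 6 = n ^ (12 * n) := by
            rw [← pow_mul]
            congr 1
            ring
        _ < 2 ^ (n * (n - 3)) := LooplessCount.arith hn
        _ ≤ 2 ^ (6 * (LooplessCount.T n).card) := Nat.pow_le_pow_right (by norm_num) hTle
        _ = (2 ^ (LooplessCount.T n).card) ^ 6 := by
            rw [← pow_mul]
            congr 1
            ring
    exact lt_of_pow_lt_pow_left₀ 6 (Nat.zero_le _) h6
  calc Nat.card {M : Matroid (Fin n) // M.E = Set.univ ∧ (∀ x : Fin n, M.Indep {x}) ∧
        ∀ B, M.IsBase B → B.ncard = 2} ^ 2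
      ≤ (n ^ n) ^ 2 := Nat.pow_le_pow_left h2 2
    _ = n ^ (2 * n) := by
        rw [← pow_mul]
        congr 1
        ring
    _ < 2 ^ (LooplessCount.T n).card := key
    _ ≤ Nat.card {M : Matroid (Fin n) // M.E = Set.univ ∧ (∀ x : Fin n, M.Indep {x}) ∧
        ∀ B, M.IsBase B → B.ncard = 3} := h3
    _ ≤ Nat.card {M : Matroid (Fin n) // M.E = Set.univ ∧ (∀ x : Fin n, M.Indep {x}) ∧
          ∀ B, M.IsBase B → B.ncard = 1} *
        Nat.card {M : Matroid (Fin n) // M.E = Set.univ ∧ (∀ x : Fin n, M.Indep {x}) ∧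
          ∀ B, M.IsBase B → B.ncard = 3} := Nat.le_mul_of_pos_left _ h1
end

section
/- For every natural number n ≥ 67, the product of the number of isomorphism classes of loopless rank-1 matroids and the number of isomorphism classes of loopless rank-3 matroids on an n-element ground set strictly exceeds the square of the number of isomorphism classes of loopless rank-2 matroids; equivalently, since there is exactly one isomorphism class of loopless rank-1 matroids, the number of isomorphism classes of loopless rank-3 matroids is strictly greater than (p(n) − 1)^2, where p(n) is the number of partitions of the integer n. -/
open Set

namespace LMCaux

instance matroidFinite {α : Type*} [Finite α] : Finite (Matroid α) := by
  have h : Function.Injective (fun M : Matroid α => (M.E, M.Indep)) := by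
    intro M N h
    simp only [Prod.mk.injEq] at h
    exact Matroid.ext_indep h.1 (fun ⦃I⦄ _ => by rw [h.2])
  exact Finite.of_injective _ h

lemma mapEquiv_refl {α : Type*} (M : Matroid α) : M.mapEquiv (Equiv.refl α) = M := by
  refine (Matroid.ext_indep ?_ (fun ⦃I⦄ _ => ?_)).symm
  · simp
  · simp

lemma mapEquiv_mapEquiv {α : Type*} (M : Matroid α) (e f : Equiv.Perm α) :
    (M.mapEquiv e).mapEquiv f = M.mapEquiv (e.trans f) := by
  refine Matroid.ext_indep ?_ (fun ⦃I⦄ _ => ?_)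
  · simp [Set.image_image]
  · simp [Set.image_image]

def mrel {α : Type*} {P : Matroid α → Prop} : {M : Matroid α // P M} → {M : Matroid α // P M} → Prop :=
  fun M₁ M₂ => ∃ π : Equiv.Perm α, M₂.1 = M₁.1.mapEquiv π

lemma mrel_equivalence {α : Type*} {P : Matroid α → Prop} :
    Equivalence (mrel (α := α) (P := P)) := by
  constructor
  · exact fun M => ⟨Equiv.refl α, (mapEquiv_refl M.1).symm⟩
  · rintro M N ⟨π, h⟩
    exact ⟨π.symm, by rw [h, mapEquiv_mapEquiv, Equiv.self_trans_symm, mapEquiv_refl]⟩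
  · rintro M N K ⟨π, h⟩ ⟨σ, h'⟩
    exact ⟨π.trans σ, by rw [h', h, mapEquiv_mapEquiv]⟩

instance quotFinite {α : Type*} [Finite α] (r : α → α → Prop) : Finite (Quot r) :=
  Finite.of_surjective (Quot.mk r) Quot.mk_surjective

lemma nat_card_le_mul {α β : Type*} [Finite α] [Finite β] (f : α → β) (k : ℕ)
    (h : ∀ b : β, Nat.card {a // f a = b} ≤ k) : Nat.card α ≤ Nat.card β * k := by
  classical
  letI := Fintype.ofFinite α; letI := Fintype.ofFinite β; letI := Classical.decEq β
  rw [Nat.card_eq_fintype_card, Nat.card_eq_fintype_card]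
  calc Fintype.card α = ∑ b : β, (Finset.univ.filter fun a => f a = b).card := by
        rw [← Finset.card_univ]
        exact Finset.card_eq_sum_card_fiberwise (f := f) (t := Finset.univ) (fun x _ => Finset.mem_univ _)
    _ ≤ ∑ _b : β, k := Finset.sum_le_sum fun b _ => by
        rw [← Fintype.card_subtype, ← Nat.card_eq_fintype_card]
        exact h b
    _ = Fintype.card β * k := by simp [mul_comm]

lemma card_le_quot_mul_perm {α : Type*} [Finite α] {P : Matroid α → Prop}
    {ι : Type*} [Finite ι] (Φ : ι → {M : Matroid α // P M}) (hΦ : Function.Injective Φ) :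
    Nat.card ι ≤ Nat.card (Quot (mrel (α := α) (P := P))) * (Nat.card (Equiv.Perm α)) := by
  haveI := quotFinite (mrel (α := α) (P := P))
  apply nat_card_le_mul (fun i => Quot.mk _ (Φ i))
  intro c
  by_cases hne : Nonempty {i // Quot.mk _ (Φ i) = c}
  · obtain ⟨⟨i₀, h₀⟩⟩ := hne
    have key : ∀ (x : {i // Quot.mk _ (Φ i) = c}),
        ∃ π : Equiv.Perm α, (Φ x.1).1 = (Φ i₀).1.mapEquiv π := by
      rintro ⟨i, hi⟩
      exact ((mrel_equivalence).quot_mk_eq_iff _ _).mp (h₀.trans hi.symm)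
    choose g hg using key
    have hginj : Function.Injective g := by
      intro x y hxy
      have h2 : (Φ x.1).1 = (Φ y.1).1 := by rw [hg x, hg y, hxy]
      exact Subtype.ext (hΦ (Subtype.ext h2))
    exact Nat.card_le_card_of_injective g hginj
  · rw [not_nonempty_iff] at hne
    simp [Nat.card_of_isEmpty]


section pav

variable {α : Type*} [Finite α] {r : ℕ} {S S₁ S₂ : Set (Set α)}

structure PavOK (r : ℕ) (S : Set (Set α)) : Prop where
  hr : 1 ≤ r
  hcard : r + 1 ≤ Nat.card α
  hS : ∀ s ∈ S, s.ncard = r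
  hSS : ∀ s ∈ S, ∀ t ∈ S, s ≠ t → (s ∩ t).ncard + 2 ≤ r
  hS1 : ∀ x : α, {x} ∉ S

lemma PavOK.subsing (h : PavOK r S) {I : Set α} {e e' : α} (he : e ∉ I) (he' : e' ∉ I)
    (hne : e ≠ e') (h1 : insert e I ∈ S) (h2 : insert e' I ∈ S) : False := by
  have hst : insert e I ≠ insert e' I := by
    intro hh
    have h3 : e ∈ insert e' I := hh ▸ Set.mem_insert e I
    rcases h3 with h3 | h3
    exacts [hne h3, he h3]
  have h3 := h.hSS _ h1 _ h2 hst
  have h4 : I ⊆ insert e I ∩ insert e' I :=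
    Set.subset_inter (Set.subset_insert _ _) (Set.subset_insert _ _)
  have h5 : I.ncard ≤ (insert e I ∩ insert e' I).ncard := Set.ncard_le_ncard h4 (Set.toFinite _)
  have h6 : (insert e I).ncard = I.ncard + 1 := Set.ncard_insert_of_notMem he (Set.toFinite _)
  have h7 := h.hS _ h1
  omega

def pav (r : ℕ) (S : Set (Set α)) (h : PavOK r S) : Matroid α :=
  (IndepMatroid.ofFinite (Set.finite_univ) (fun I => I.ncard ≤ r ∧ I ∉ S)
    (by
      refine ⟨by simp, fun hc => ?_⟩
      have h1 := h.hS _ hc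
      have h2 := h.hr
      simp only [Set.ncard_empty] at h1
      omega)
    (by
      rintro I J ⟨hJr, hJS⟩ hIJ
      refine ⟨le_trans (Set.ncard_le_ncard hIJ (Set.toFinite _)) hJr, fun hc => ?_⟩
      have h1 : J.ncard ≤ I.ncard := by rw [h.hS _ hc] at *; exact hJr
      exact hJS ((Set.eq_of_subset_of_ncard_le hIJ h1 (Set.toFinite _)) ▸ hc))
    (by
      rintro I J ⟨hIr, hIS⟩ ⟨hJr, hJS⟩ hlt
      by_cases hex : ∃ e ∈ J, e ∉ I ∧ insert e I ∉ S
      · obtain ⟨e, heJ, heI, hins⟩ := hex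
        refine ⟨e, heJ, heI, ?_, hins⟩
        rw [Set.ncard_insert_of_notMem heI (Set.toFinite _)]
        omega
      · push_neg at hex
        obtain ⟨e, heJ, heI⟩ := Set.exists_mem_notMem_of_ncard_lt_ncard hlt (Set.toFinite _)
        have hsub : J ⊆ insert e I := by
          intro x hx
          by_cases hxI : x ∈ I
          · exact Set.mem_insert_of_mem _ hxI
          by_cases hxe : x = e
          · exact hxe ▸ Set.mem_insert _ _
          · exact (h.subsing hxI heI hxe (hex x hx hxI) (hex e heJ heI)).elim
        have h1 : (insert e I).ncard = I.ncard + 1 := Set.ncard_insert_of_notMem heI (Set.toFinite _)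
        have h2 : J = insert e I := Set.eq_of_subset_of_ncard_le hsub (by omega) (Set.toFinite _)
        have h3 : J ∈ S := by rw [h2]; exact hex e heJ heI
        exact (hJS h3).elim)
    (fun I _ => Set.subset_univ I)).matroid

@[simp] lemma pav_indep (h : PavOK r S) {I : Set α} :
    (pav r S h).Indep I ↔ I.ncard ≤ r ∧ I ∉ S := by
  simp [pav]

@[simp] lemma pav_ground (h : PavOK r S) : (pav r S h).E = univ := rfl

lemma pav_base_ncard (h : PavOK r S) {B : Set α} (hB : (pav r S h).IsBase B) : B.ncard = r := by
  have hBi := hB.indep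
  rw [pav_indep] at hBi
  by_contra hne
  have hlt : B.ncard < r := lt_of_le_of_ne hBi.1 hne
  have hcard := h.hcard
  have hmax : ∀ e, e ∉ B → insert e B ∉ S → False := by
    intro e heB hins
    have hind : (pav r S h).Indep (insert e B) := by
      rw [pav_indep]
      refine ⟨?_, hins⟩
      rw [Set.ncard_insert_of_notMem heB (Set.toFinite _)]
      omega
    have h4 := hB.eq_of_subset_indep hind (Set.subset_insert _ _)
    exact heB (by rw [h4]; exact Set.mem_insert _ _)
  have hBu : B.ncard < (univ : Set α).ncard := by rw [Set.ncard_univ]; omega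
  obtain ⟨e₀, -, he₀⟩ := Set.exists_mem_notMem_of_ncard_lt_ncard hBu (Set.toFinite _)
  have h1 : insert e₀ B ∈ S := by
    by_contra hc; exact hmax e₀ he₀ hc
  have h2 : 1 < (univ \ B).ncard := by
    rw [Set.ncard_diff (Set.subset_univ _) (Set.toFinite _), Set.ncard_univ]
    omega
  obtain ⟨e₁, he₁, hne₁⟩ := Set.exists_ne_of_one_lt_ncard h2 e₀
  have he₁B : e₁ ∉ B := he₁.2
  have h3 : insert e₁ B ∈ S := by
    by_contra hc; exact hmax e₁ he₁B hc
  exact h.subsing he₁B he₀ hne₁ h3 h1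

lemma pav_prop (h : PavOK r S) :
    (pav r S h).E = univ ∧ (∀ x : α, (pav r S h).Indep {x}) ∧
      ∀ B, (pav r S h).IsBase B → B.ncard = r := by
  refine ⟨rfl, fun x => ?_, fun B hB => pav_base_ncard h hB⟩
  rw [pav_indep]
  exact ⟨by rw [Set.ncard_singleton]; exact h.hr, h.hS1 x⟩

lemma pav_injective (h₁ : PavOK r S₁) (h₂ : PavOK r S₂) (he : pav r S₁ h₁ = pav r S₂ h₂) :
    S₁ = S₂ := by
  have key : ∀ (S S' : Set (Set α)) (h : PavOK r S) (h' : PavOK r S'),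
      pav r S h = pav r S' h' → S ⊆ S' := by
    intro S S' h h' heq s hs
    by_contra hns
    have hi : (pav r S' h').Indep s := by
      rw [pav_indep]; exact ⟨(h.hS s hs).le, hns⟩
    rw [← heq, pav_indep] at hi
    exact hi.2 hs
  exact le_antisymm (key _ _ h₁ h₂ he) (key _ _ h₂ h₁ he.symm)

end pav


section triples

variable (n : ℕ) [NeZero n]

def trip : Finset (Finset (Fin n)) :=
  Finset.univ.filter (fun s => s.card = 3 ∧ s.sum id = 0)

variable {n}

lemma trip_card_eq {s : Finset (Fin n)} (hs : s ∈ trip n) : s.card = 3 :=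
  (Finset.mem_filter.mp hs).2.1

lemma trip_third {s : Finset (Fin n)} (hs : s ∈ trip n)
    {u : Finset (Fin n)} (hu : u ⊆ s) (hu2 : u.card = 2) : s = insert (-(u.sum id)) u := by
  obtain ⟨-, hs3, hs0⟩ := Finset.mem_filter.mp hs
  have h1 : (s \ u).card = 1 := by
    rw [Finset.card_sdiff_of_subset hu, hs3, hu2]
  obtain ⟨z, hz⟩ := Finset.card_eq_one.mp h1
  have hzu : z ∉ u := by
    have : z ∈ s \ u := hz ▸ Finset.mem_singleton_self z
    exact (Finset.mem_sdiff.mp this).2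
  have h2 : s = insert z u := by
    rw [← Finset.union_sdiff_of_subset hu, hz]
    ext x; simp [or_comm]
  have h3 : z + u.sum id = 0 := by
    rw [h2] at hs0
    rw [Finset.sum_insert hzu] at hs0
    simpa using hs0
  have h4 : z = -(u.sum id) := by
    rw [eq_neg_iff_add_eq_zero]; exact h3
  rw [h2, h4]

lemma trip_inter {s t : Finset (Fin n)} (hs : s ∈ trip n) (ht : t ∈ trip n) (hne : s ≠ t) :
    ((s : Set (Fin n)) ∩ (t : Set (Fin n))).ncard + 2 ≤ 3 := by
  rw [← Finset.coe_inter, Set.ncard_coe_finset]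
  by_contra hc
  push_neg at hc
  have h2 : 2 ≤ (s ∩ t).card := by omega
  obtain ⟨u, hu, hu2⟩ := Finset.exists_subset_card_eq (s := s ∩ t) h2
  have h3 : s = insert (-(u.sum id)) u :=
    trip_third hs (hu.trans (Finset.inter_subset_left)) hu2
  have h4 : t = insert (-(u.sum id)) u :=
    trip_third ht (hu.trans (Finset.inter_subset_right)) hu2
  exact hne (h3.trans h4.symm)

def goodpairs : Finset (Fin n × Fin n) :=
  Finset.univ.filter (fun p => p.1 ≠ p.2 ∧ p.1 + p.1 + p.2 ≠ 0 ∧ p.1 + p.2 + p.2 ≠ 0)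

def tripmk : Fin n × Fin n → Finset (Fin n) := fun p => {p.1, p.2, -(p.1+p.2)}

open Fin.CommRing in
lemma tripmk_mem {p : Fin n × Fin n} (hp : p ∈ goodpairs) : tripmk p ∈ trip n := by
  obtain ⟨-, h1, h2, h3⟩ := Finset.mem_filter.mp hp
  have e1 : p.1 ≠ -(p.1+p.2) := by
    rw [Ne, eq_neg_iff_add_eq_zero, ← add_assoc]; exact h2
  have e2 : p.2 ≠ -(p.1+p.2) := by
    rw [Ne, eq_neg_iff_add_eq_zero]
    intro hh; apply h3; rw [← hh]; ring
  have m1 : p.1 ∉ ({p.2, -(p.1+p.2)} : Finset (Fin n)) := by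
    simp only [Finset.mem_insert, Finset.mem_singleton]
    push_neg; exact ⟨h1, e1⟩
  have m2 : p.2 ∉ ({-(p.1+p.2)} : Finset (Fin n)) := by
    simp only [Finset.mem_singleton]; exact e2
  refine Finset.mem_filter.mpr ⟨Finset.mem_univ _, ?_, ?_⟩
  · rw [tripmk, Finset.card_insert_of_notMem m1, Finset.card_insert_of_notMem m2,
      Finset.card_singleton]
  · rw [tripmk, Finset.sum_insert m1, Finset.sum_insert m2, Finset.sum_singleton]
    simp only [id]
    ring

open Fin.CommRing in
lemma goodpairs_card_lb : n * n ≤ (goodpairs : Finset (Fin n × Fin n)).card + 3 * n := by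
  classical
  set f₁ : Finset (Fin n × Fin n) := Finset.univ.filter (fun p => p.1 = p.2) with hf₁
  set f₂ : Finset (Fin n × Fin n) := Finset.univ.filter (fun p => p.1 + p.1 + p.2 = 0) with hf₂
  set f₃ : Finset (Fin n × Fin n) := Finset.univ.filter (fun p => p.1 + p.2 + p.2 = 0) with hf₃
  have hc1 : f₁.card ≤ n := by
    calc f₁.card ≤ (Finset.univ : Finset (Fin n)).card := by
          apply Finset.card_le_card_of_injOn (fun p : Fin n × Fin n => p.1)
            (fun p _ => Finset.mem_univ _)
          intro p hp q hq hpq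
          simp only [hf₁, Finset.coe_filter, Finset.mem_univ, true_and, Set.mem_setOf_eq] at hp hq
          have hpq' : p.1 = q.1 := hpq
          exact Prod.ext hpq' (by rw [← hp, ← hq, hpq'])
      _ = n := by simp
  have hc2 : f₂.card ≤ n := by
    calc f₂.card ≤ (Finset.univ : Finset (Fin n)).card := by
          apply Finset.card_le_card_of_injOn (fun p : Fin n × Fin n => p.1)
            (fun p _ => Finset.mem_univ _)
          intro p hp q hq hpq
          simp only [hf₂, Finset.coe_filter, Finset.mem_univ, true_and, Set.mem_setOf_eq] at hp hq
          have hpq' : p.1 = q.1 := hpq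
          refine Prod.ext hpq' ?_
          have e1 : p.2 = -(p.1+p.1) := by rw [eq_neg_iff_add_eq_zero, ← hp]; ring
          have e2 : q.2 = -(q.1+q.1) := by rw [eq_neg_iff_add_eq_zero, ← hq]; ring
          rw [e1, e2, hpq']
      _ = n := by simp
  have hc3 : f₃.card ≤ n := by
    calc f₃.card ≤ (Finset.univ : Finset (Fin n)).card := by
          apply Finset.card_le_card_of_injOn (fun p : Fin n × Fin n => p.2)
            (fun p _ => Finset.mem_univ _)
          intro p hp q hq hpq
          simp only [hf₃, Finset.coe_filter, Finset.mem_univ, true_and, Set.mem_setOf_eq] at hp hq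
          have hpq' : p.2 = q.2 := hpq
          refine Prod.ext ?_ hpq'
          have e1 : p.1 = -(p.2+p.2) := by rw [eq_neg_iff_add_eq_zero, ← hp]; ring
          have e2 : q.1 = -(q.2+q.2) := by rw [eq_neg_iff_add_eq_zero, ← hq]; ring
          rw [e1, e2, hpq']
      _ = n := by simp
  have hcover : (Finset.univ : Finset (Fin n × Fin n)) ⊆ goodpairs ∪ (f₁ ∪ (f₂ ∪ f₃)) := by
    intro p _
    by_cases h1 : p.1 = p.2
    · exact Finset.mem_union_right _ (Finset.mem_union_left _
        (Finset.mem_filter.mpr ⟨Finset.mem_univ _, h1⟩))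
    by_cases h2 : p.1 + p.1 + p.2 = 0
    · exact Finset.mem_union_right _ (Finset.mem_union_right _ (Finset.mem_union_left _
        (Finset.mem_filter.mpr ⟨Finset.mem_univ _, h2⟩)))
    by_cases h3 : p.1 + p.2 + p.2 = 0
    · exact Finset.mem_union_right _ (Finset.mem_union_right _ (Finset.mem_union_right _
        (Finset.mem_filter.mpr ⟨Finset.mem_univ _, h3⟩)))
    · exact Finset.mem_union_left _ (Finset.mem_filter.mpr ⟨Finset.mem_univ _, h1, h2, h3⟩)
  have h5 : (Finset.univ : Finset (Fin n × Fin n)).card = n * n := by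
    simp [Finset.card_univ]
  calc n * n = (Finset.univ : Finset (Fin n × Fin n)).card := h5.symm
    _ ≤ (goodpairs ∪ (f₁ ∪ (f₂ ∪ f₃))).card := Finset.card_le_card hcover
    _ ≤ goodpairs.card + (f₁ ∪ (f₂ ∪ f₃)).card := Finset.card_union_le _ _
    _ ≤ goodpairs.card + (f₁.card + (f₂.card + f₃.card)) := by
        have := Finset.card_union_le f₁ (f₂ ∪ f₃)
        have := Finset.card_union_le f₂ f₃
        omega
    _ ≤ goodpairs.card + 3 * n := by omega

lemma trip_card_lb : n * n ≤ 6 * (trip n).card + 3 * n := by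
  classical
  have himg : (goodpairs : Finset (Fin n × Fin n)).image tripmk ⊆ trip n := by
    intro b hb
    obtain ⟨p, hp, rfl⟩ := Finset.mem_image.mp hb
    exact tripmk_mem hp
  have hfib : ∀ b ∈ (goodpairs : Finset (Fin n × Fin n)).image tripmk,
      (goodpairs.filter (fun a => tripmk a = b)).card ≤ 6 := by
    intro b hb
    have hb3 : b.card = 3 := trip_card_eq (himg hb)
    have hsub : goodpairs.filter (fun a => tripmk a = b) ⊆ b.offDiag := by
      intro p hp
      obtain ⟨hp1, hp2⟩ := Finset.mem_filter.mp hp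
      obtain ⟨-, hne, -, -⟩ := Finset.mem_filter.mp hp1
      rw [Finset.mem_offDiag]
      refine ⟨?_, ?_, hne⟩
      · rw [← hp2]; exact Finset.mem_insert_self _ _
      · rw [← hp2]; exact Finset.mem_insert_of_mem (Finset.mem_insert_self _ _)
    calc (goodpairs.filter (fun a => tripmk a = b)).card ≤ b.offDiag.card :=
          Finset.card_le_card hsub
      _ = 6 := by rw [Finset.offDiag_card, hb3]
  have h1 : (goodpairs : Finset (Fin n × Fin n)).card ≤ 6 * (goodpairs.image tripmk).card :=
    Finset.card_le_mul_card_image _ 6 hfib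
  have h2 : (goodpairs.image tripmk).card ≤ (trip n).card := Finset.card_le_card himg
  have h3 := goodpairs_card_lb (n := n)
  omega

end triples

section numeric

lemma pow6_aux (n : ℕ) (h : 67 ≤ n) : (4*(n+1))^6 ≤ 2^(2*n-2) := by
  induction n, h using Nat.le_induction with
  | base => norm_num
  | succ n hn ih =>
    have ha : 6*n+6 ≤ n*n := by nlinarith
    have hb : n*n ≤ n*n*n := Nat.le_mul_of_pos_right _ (by omega)
    have h1 : (n+2)^3 ≤ 2*(n+1)^3 := by nlinarith [ha, hb]
    have h2 : (4*(n+1+1))^6 ≤ 4 * (4*(n+1))^6 := by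
      have h3 : ((n+2)^3)^2 ≤ (2*(n+1)^3)^2 := Nat.pow_le_pow_left h1 2
      calc (4*(n+1+1))^6 = 4^6 * ((n+2)^3)^2 := by ring
        _ ≤ 4^6 * (2*(n+1)^3)^2 := Nat.mul_le_mul_left _ h3
        _ = 4 * (4*(n+1))^6 := by ring
    have h4 : 2*(n+1)-2 = (2*n-2) + 2 := by omega
    calc (4*(n+1+1))^6 ≤ 4 * (4*(n+1))^6 := h2
      _ ≤ 4 * 2^(2*n-2) := Nat.mul_le_mul_left _ ih
      _ = 2^(2*(n+1)-2) := by rw [h4, pow_add]; ring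

lemma keyNumeric (n : ℕ) (h : 67 ≤ n) : (2^(2*n) * n.factorial)^6 < 2^(n*(n-3)) := by
  induction n, h using Nat.le_induction with
  | base =>
    have f67 : Nat.factorial 67 < 2^320 := by decide
    have h1 : (2^(2*67) * Nat.factorial 67)^6 < (2^(2*67) * 2^320)^6 := by
      apply Nat.pow_lt_pow_left _ (by norm_num)
      exact mul_lt_mul_of_pos_left f67 (by positivity)
    have h2 : ((2:ℕ)^(2*67) * 2^320)^6 = 2^2724 := by
      rw [← pow_add, ← pow_mul]
    have h3 : (2:ℕ)^2724 ≤ 2^(67*(67-3)) := by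
      apply Nat.pow_le_pow_right (by norm_num)
      norm_num
    calc (2^(2*67) * Nat.factorial 67)^6 < (2^(2*67) * 2^320)^6 := h1
      _ = 2^2724 := h2
      _ ≤ 2^(67*(67-3)) := h3
  | succ m hn ih =>
    have h4 : (m+1)*(m+1-3) = m*(m-3) + (2*m-2) := by
      obtain ⟨k, rfl⟩ : ∃ k, m = k + 67 := ⟨m - 67, by omega⟩
      have e1 : k+67+1-3 = k+65 := by omega
      have e2 : k+67-3 = k+64 := by omega
      have e3 : 2*(k+67)-2 = 2*k+132 := by omega
      rw [e1, e2, e3]; ring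
    have he : (2:ℕ)^(2*(m+1)) = 4 * 2^(2*m) := by
      rw [show 2*(m+1) = 2*m+2 by ring, pow_add]; ring
    calc (2^(2*(m+1)) * (m+1).factorial)^6
        = (4*(m+1))^6 * (2^(2*m)*m.factorial)^6 := by
          rw [Nat.factorial_succ, he]; ring
      _ ≤ 2^(2*m-2) * (2^(2*m)*m.factorial)^6 :=
          Nat.mul_le_mul_right _ (pow6_aux _ hn)
      _ < 2^(2*m-2) * 2^(m*(m-3)) := mul_lt_mul_of_pos_left ih (by positivity)
      _ = 2^((m+1)*(m+1-3)) := by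
          rw [← pow_add]
          congr 1
          rw [h4]
          exact Nat.add_comm _ _

end numeric


section ranktwo

variable {n : ℕ}

def IsLR2 (M : Matroid (Fin n)) : Prop :=
  M.E = Set.univ ∧ (∀ x : Fin n, M.Indep {x}) ∧ ∀ B, M.IsBase B → B.ncard = 2

lemma IsLR2.ncard_le {M : Matroid (Fin n)} (h : IsLR2 M) {I : Set (Fin n)} (hI : M.Indep I) :
    I.ncard ≤ 2 := by
  obtain ⟨B, hB, hIB⟩ := hI.exists_isBase_superset
  have h1 := h.2.2 B hB
  have h2 := Set.ncard_le_ncard hIB (Set.toFinite _)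
  omega

lemma IsLR2.pair_base {M : Matroid (Fin n)} (h : IsLR2 M) {x y : Fin n} (hxy : x ≠ y)
    (hI : M.Indep {x, y}) : M.IsBase {x, y} := by
  obtain ⟨B, hB, hIB⟩ := hI.exists_isBase_superset
  have h2 := h.2.2 B hB
  have h3 : ({x, y} : Set (Fin n)) = B :=
    Set.eq_of_subset_of_ncard_le hIB (by rw [h2, Set.ncard_pair hxy]) (Set.toFinite _)
  rwa [h3]

lemma IsLR2.para_trans {M : Matroid (Fin n)} (h : IsLR2 M) {x y z : Fin n}
    (hxy : ¬ M.Indep {x, y}) (hyz : ¬ M.Indep {y, z}) (hxz : x ≠ z) : ¬ M.Indep {x, z} := by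
  intro hi
  have hbase := h.pair_base hxz hi
  have hynb : ¬ M.IsBase {y} := by
    intro hb
    have h1 := h.2.2 _ hb
    rw [Set.ncard_singleton] at h1
    omega
  obtain ⟨e, he, hins⟩ := (h.2.1 y).exists_insert_of_not_isBase hynb hbase
  obtain ⟨he1, -⟩ := he
  rcases he1 with rfl | he1
  · exact hxy hins
  · rw [Set.mem_singleton_iff] at he1
    subst he1
    exact hyz (by rwa [Set.pair_comm] at hins)

def para (M : Matroid (Fin n)) : Fin n → Fin n → Prop := fun x y => x = y ∨ ¬ M.Indep {x, y}

lemma IsLR2.para_equiv {M : Matroid (Fin n)} (h : IsLR2 M) : Equivalence (para M) := by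
  constructor
  · exact fun x => Or.inl rfl
  · rintro x y (rfl | hd)
    exacts [Or.inl rfl, Or.inr (by rwa [Set.pair_comm])]
  · rintro x y z (rfl | hd) hyz
    · exact hyz
    · rcases hyz with rfl | hd2
      · exact Or.inr hd
      · by_cases hxz : x = z
        · exact Or.inl hxz
        · exact Or.inr (h.para_trans hd hd2 hxz)

lemma IsLR2.indep_iff {M : Matroid (Fin n)} (h : IsLR2 M) {I : Set (Fin n)} :
    M.Indep I ↔ I.ncard ≤ 2 ∧ ∀ x ∈ I, ∀ y ∈ I, x ≠ y → M.Indep {x, y} := by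
  constructor
  · intro hI
    refine ⟨h.ncard_le hI, fun x hx y hy _ => hI.subset ?_⟩
    intro t ht
    rcases ht with rfl | ht
    · exact hx
    · rw [Set.mem_singleton_iff] at ht; subst ht; exact hy
  · rintro ⟨hc, hp⟩
    by_cases h0 : I.ncard = 0
    · rw [Set.ncard_eq_zero (Set.toFinite _)] at h0
      rw [h0]; exact M.empty_indep
    by_cases h1 : I.ncard = 1
    · obtain ⟨a, rfl⟩ := Set.ncard_eq_one.mp h1
      exact h.2.1 a
    have h2 : I.ncard = 2 := by omega
    obtain ⟨x, y, hxy, rfl⟩ := Set.ncard_eq_two.mp h2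
    exact hp x (by simp) y (by simp) hxy

lemma para_not_iff {M : Matroid (Fin n)} {x y : Fin n} (hxy : x ≠ y) :
    ¬ para M x y ↔ M.Indep {x, y} := by
  unfold para
  push_neg
  constructor
  · rintro ⟨-, h2⟩; exact h2
  · intro h2; exact ⟨hxy, h2⟩

lemma para_mapEquiv (M : Matroid (Fin n)) (π : Equiv.Perm (Fin n)) (x y : Fin n) :
    para (M.mapEquiv π) (π x) (π y) ↔ para M x y := by
  unfold para
  rw [Matroid.mapEquiv_indep_iff]
  have himg : π.symm '' {π x, π y} = ({x, y} : Set (Fin n)) := by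
    rw [Set.image_pair]
    simp
  rw [himg, EmbeddingLike.apply_eq_iff_eq]

noncomputable instance instQuotParaFintype (M : Matroid (Fin n)) : Fintype (Quot (para M)) :=
  Fintype.ofFinite _

noncomputable instance instFiberFintype (M : Matroid (Fin n)) (c : Quot (para M)) :
    Fintype {x : Fin n // Quot.mk (para M) x = c} :=
  Fintype.ofFinite _

/-- The multiset of parallel-class sizes. -/
noncomputable def partsOf (M : Matroid (Fin n)) : Multiset ℕ :=
  (Finset.univ : Finset (Quot (para M))).val.map
    (fun c => Nat.card {x : Fin n // Quot.mk (para M) x = c})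

/-- The multiset of parallel-class sizes, as a partition of `n`. -/
noncomputable def invPartition (M : Matroid (Fin n)) : Nat.Partition n where
  parts := partsOf M
  parts_pos := by
    intro i hi
    unfold partsOf at hi
    simp only [Multiset.mem_map] at hi
    obtain ⟨c, -, rfl⟩ := hi
    obtain ⟨x, rfl⟩ := Quot.exists_rep c
    haveI : Nonempty {x' : Fin n // Quot.mk (para M) x' = Quot.mk (para M) x} := ⟨⟨x, rfl⟩⟩
    exact Nat.card_pos
  parts_sum := by
    unfold partsOf
    calc ((Finset.univ : Finset (Quot (para M))).val.map
          (fun c => Nat.card {x : Fin n // Quot.mk (para M) x = c})).sum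
        = ∑ c : Quot (para M), Nat.card {x : Fin n // Quot.mk (para M) x = c} := rfl
      _ = ∑ c : Quot (para M), Fintype.card {x : Fin n // Quot.mk (para M) x = c} :=
          Finset.sum_congr rfl (fun c _ => Nat.card_eq_fintype_card)
      _ = Fintype.card (Σ c : Quot (para M), {x : Fin n // Quot.mk (para M) x = c}) :=
          Fintype.card_sigma.symm
      _ = Fintype.card (Fin n) := Fintype.card_congr (Equiv.sigmaFiberEquiv _)
      _ = n := Fintype.card_fin n

lemma invPartition_mapEquiv (M : Matroid (Fin n)) (π : Equiv.Perm (Fin n)) :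
    invPartition (M.mapEquiv π) = invPartition M := by
  apply Nat.Partition.ext
  show partsOf (M.mapEquiv π) = partsOf M
  have hcor : ∀ a b : Fin n, para M a b ↔ para (M.mapEquiv π) (π a) (π b) :=
    fun a b => (para_mapEquiv M π a b).symm
  let e : Quot (para M) ≃ Quot (para (M.mapEquiv π)) := Quot.congr π hcor
  have hfib : ∀ c : Quot (para M),
      Nat.card {y : Fin n // Quot.mk (para (M.mapEquiv π)) y = e c}
        = Nat.card {x : Fin n // Quot.mk (para M) x = c} := by
    intro c
    apply Nat.card_congr
    refine (Equiv.subtypeEquiv π (fun x => ?_)).symm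
    have h2 : e (Quot.mk (para M) x) = Quot.mk (para (M.mapEquiv π)) (π x) :=
      Quot.congr_mk π hcor x
    rw [← h2]
    exact (Equiv.apply_eq_iff_eq e).symm
  unfold partsOf
  have huniv : (Finset.univ : Finset (Quot (para (M.mapEquiv π))))
      = (Finset.univ : Finset (Quot (para M))).map e.toEmbedding := by
    rw [Finset.univ_map_equiv_to_embedding]
  rw [huniv, Finset.map_val, Multiset.map_map]
  exact Multiset.map_congr rfl (fun c _ => hfib c)

lemma exists_perm_of_invPartition_eq {M₁ M₂ : Matroid (Fin n)} (h₁ : IsLR2 M₁) (h₂ : IsLR2 M₂)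
    (hinv : invPartition M₁ = invPartition M₂) :
    ∃ π : Equiv.Perm (Fin n), M₂ = M₁.mapEquiv π := by
  classical
  have hp : partsOf M₁ = partsOf M₂ := congrArg Nat.Partition.parts hinv
  have hcount : ∀ k : ℕ,
      Fintype.card {c : Quot (para M₁) // Nat.card {x : Fin n // Quot.mk (para M₁) x = c} = k}
        = Fintype.card {c : Quot (para M₂) //
            Nat.card {y : Fin n // Quot.mk (para M₂) y = c} = k} := by
    intro k
    have hc := congrArg (Multiset.count k) hp
    unfold partsOf at hc
    rw [Multiset.count_map, Multiset.count_map] at hc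
    rw [Fintype.card_subtype, Fintype.card_subtype]
    have e1 : ∀ (Q : Type) (inst : Fintype Q) (σ : Q → ℕ),
        (@Finset.filter Q (fun c => σ c = k) (fun c => instDecidableEqNat (σ c) k)
            (@Finset.univ Q inst)).card
          = Multiset.card (Multiset.filter (fun c => k = σ c) (@Finset.univ Q inst).val) := by
      intro Q inst σ
      rw [Finset.card_def, Finset.filter_val]
      congr 1
      apply Multiset.filter_congr
      intro c _
      constructor
      · intro hh; exact hh.symm
      · intro hh; exact hh.symm
    rw [e1, e1]
    convert hc using 2 <;> congr 1 <;> exact Subsingleton.elim _ _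
  let F : Quot (para M₁) ≃ Quot (para M₂) :=
    (Equiv.sigmaFiberEquiv (fun c : Quot (para M₁) =>
        Nat.card {x : Fin n // Quot.mk (para M₁) x = c})).symm.trans
      ((Equiv.sigmaCongrRight (fun k => Fintype.equivOfCardEq (hcount k))).trans
        (Equiv.sigmaFiberEquiv (fun c : Quot (para M₂) =>
          Nat.card {y : Fin n // Quot.mk (para M₂) y = c})))
  have hF : ∀ c : Quot (para M₁),
      Nat.card {y : Fin n // Quot.mk (para M₂) y = F c}
        = Nat.card {x : Fin n // Quot.mk (para M₁) x = c} := fun c =>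
    ((Fintype.equivOfCardEq (hcount (Nat.card {x : Fin n // Quot.mk (para M₁) x = c})))
      ⟨c, rfl⟩).2
  have hfibcard : ∀ c : Quot (para M₁),
      Fintype.card {x : Fin n // Quot.mk (para M₁) x = c}
        = Fintype.card {y : Fin n // Quot.mk (para M₂) y = F c} := by
    intro c
    rw [← Nat.card_eq_fintype_card, ← Nat.card_eq_fintype_card]
    exact (hF c).symm
  let G : ∀ c : Quot (para M₁),
      {x : Fin n // Quot.mk (para M₁) x = c} ≃ {y : Fin n // Quot.mk (para M₂) y = F c} :=
    fun c => Fintype.equivOfCardEq (hfibcard c)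
  let π : Equiv.Perm (Fin n) :=
    (Equiv.sigmaFiberEquiv (fun x : Fin n => Quot.mk (para M₁) x)).symm.trans
      ((Equiv.sigmaCongr F G).trans
        (Equiv.sigmaFiberEquiv (fun y : Fin n => Quot.mk (para M₂) y)))
  have hπ : ∀ x : Fin n, Quot.mk (para M₂) (π x) = F (Quot.mk (para M₁) x) :=
    fun x => (G _ ⟨x, rfl⟩).2
  have hD : ∀ x y : Fin n, para M₁ x y ↔ para M₂ (π x) (π y) := by
    intro x y
    rw [← (h₁.para_equiv.quot_mk_eq_iff x y), ← (h₂.para_equiv.quot_mk_eq_iff (π x) (π y))]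
    rw [hπ, hπ]
    exact (Equiv.apply_eq_iff_eq F).symm
  refine ⟨π, Matroid.ext_indep ?_ ?_⟩
  · rw [h₂.1, Matroid.mapEquiv_ground_eq, h₁.1, Set.image_univ, Equiv.range_eq_univ]
  · intro I hI
    rw [Matroid.mapEquiv_indep_iff, h₂.indep_iff, h₁.indep_iff]
    constructor
    · rintro ⟨hc, hp2⟩
      refine ⟨by rwa [Set.ncard_image_of_injective _ π.symm.injective], ?_⟩
      rintro a ⟨x, hx, rfl⟩ b ⟨y, hy, rfl⟩ hab
      have hxy : x ≠ y := fun hh => hab (by rw [hh])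
      have h5 := hp2 x hx y hy hxy
      have h6 : ¬ para M₂ x y := (para_not_iff hxy).mpr h5
      have h7 : ¬ para M₁ (π.symm x) (π.symm y) := by
        intro hq
        apply h6
        have h8 := (hD (π.symm x) (π.symm y)).mp hq
        simpa using h8
      have hne : π.symm x ≠ π.symm y := fun hh => hxy (by simpa using congrArg π hh)
      exact (para_not_iff hne).mp h7
    · rintro ⟨hc, hp2⟩
      refine ⟨by rwa [Set.ncard_image_of_injective _ π.symm.injective] at hc, ?_⟩
      intro x hx y hy hxy
      have hmem1 : π.symm x ∈ π.symm '' I := ⟨x, hx, rfl⟩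
      have hmem2 : π.symm y ∈ π.symm '' I := ⟨y, hy, rfl⟩
      have hne : π.symm x ≠ π.symm y := fun hh => hxy (by simpa using congrArg π hh)
      have h5 := hp2 _ hmem1 _ hmem2 hne
      have h6 : ¬ para M₁ (π.symm x) (π.symm y) := (para_not_iff hne).mpr h5
      have h7 : ¬ para M₂ x y := by
        intro hq
        apply h6
        rw [hD (π.symm x) (π.symm y)]
        simpa using hq
      exact (para_not_iff hxy).mp h7

lemma quot2_card_le :
    Nat.card (Quot (mrel (α := Fin n) (P := IsLR2))) ≤ Nat.card (Nat.Partition n) := by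
  have hlift : ∀ (a b : {M : Matroid (Fin n) // IsLR2 M}), mrel a b →
      invPartition a.1 = invPartition b.1 := by
    rintro a b ⟨π, hb⟩
    rw [hb, invPartition_mapEquiv]
  apply Nat.card_le_card_of_injective (Quot.lift (fun M => invPartition M.1) hlift)
  intro a b hab
  obtain ⟨Ma, rfl⟩ := Quot.exists_rep a
  obtain ⟨Mb, rfl⟩ := Quot.exists_rep b
  obtain ⟨π, hπ⟩ := exists_perm_of_invPartition_eq Ma.2 Mb.2 hab
  exact Quot.sound ⟨π, hπ⟩

end ranktwo


section partitions

lemma multiset_sup_mem {s : Multiset ℕ} (hs : s ≠ 0) : s.sup ∈ s := by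
  induction s using Multiset.induction with
  | empty => simp at hs
  | cons a t ih =>
    rw [Multiset.sup_cons]
    by_cases ht : t = 0
    · subst ht; simp
    · rcases le_total t.sup a with hle | hle
      · rw [sup_eq_left.mpr hle]; exact Multiset.mem_cons_self a t
      · rw [sup_eq_right.mpr hle]; exact Multiset.mem_cons_of_mem (ih ht)

lemma sum_two_pow (n : ℕ) : ∑ j ∈ Finset.range n, 2^j = 2^n - 1 := by
  induction n with
  | zero => simp
  | succ n ih =>
    rw [Finset.sum_range_succ, ih]
    have h1 : 1 ≤ 2^n := Nat.one_le_two_pow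
    have h2 : 2^(n+1) = 2 * 2^n := by ring
    omega

variable {n : ℕ}

lemma parts_ne_zero (hn : 0 < n) (p : Nat.Partition n) : p.parts ≠ 0 := by
  intro h
  have h1 := p.parts_sum
  rw [h] at h1
  simp at h1
  omega

lemma sup_mem_parts (hn : 0 < n) (p : Nat.Partition n) : p.parts.sup ∈ p.parts :=
  multiset_sup_mem (parts_ne_zero hn p)

lemma sup_pos (hn : 0 < n) (p : Nat.Partition n) : 1 ≤ p.parts.sup :=
  p.parts_pos (sup_mem_parts hn p)

lemma sup_le_n (hn : 0 < n) (p : Nat.Partition n) : p.parts.sup ≤ n := by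
  have h1 := Multiset.single_le_sum (fun x _ => Nat.zero_le x) _ (sup_mem_parts hn p)
  rwa [p.parts_sum] at h1

lemma chop_lt (hn : 0 < n) (p : Nat.Partition n) : p.parts.sup - 1 < n := by
  have h1 := sup_pos hn p
  have h2 := sup_le_n hn p
  omega

lemma chop_sum (hn : 0 < n) (p : Nat.Partition n) :
    (p.parts.erase p.parts.sup).sum = n - 1 - (p.parts.sup - 1) := by
  have h1 : p.parts.sup + (p.parts.erase p.parts.sup).sum = p.parts.sum := by
    rw [← Multiset.sum_cons, Multiset.cons_erase (sup_mem_parts hn p)]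
  rw [p.parts_sum] at h1
  have h2 := sup_pos hn p
  have h3 := sup_le_n hn p
  omega

def chop (hn : 0 < n) (p : Nat.Partition n) : Σ k : Fin n, Nat.Partition (n - 1 - k) :=
  ⟨⟨p.parts.sup - 1, chop_lt hn p⟩,
    ⟨p.parts.erase p.parts.sup,
      fun {i} hi => p.parts_pos (Multiset.mem_of_mem_erase hi), chop_sum hn p⟩⟩

lemma chop_inj (hn : 0 < n) : Function.Injective (chop hn) := by
  intro p q h
  have hparts := congrArg (fun x : (Σ k : Fin n, Nat.Partition (n - 1 - k)) => x.2.parts) h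
  have hv := congrArg (fun x : (Σ k : Fin n, Nat.Partition (n - 1 - k)) => (x.1 : ℕ)) h
  simp only [chop] at hparts hv
  have hs : p.parts.sup = q.parts.sup := by
    have h1 := sup_pos hn p
    have h2 := sup_pos hn q
    omega
  apply Nat.Partition.ext
  calc p.parts = p.parts.sup ::ₘ p.parts.erase p.parts.sup :=
        (Multiset.cons_erase (sup_mem_parts hn p)).symm
    _ = q.parts.sup ::ₘ q.parts.erase q.parts.sup := by rw [hparts, hs]
    _ = q.parts := Multiset.cons_erase (sup_mem_parts hn q)

lemma partition_card_le : ∀ n : ℕ, Fintype.card (Nat.Partition n) ≤ 2^n := by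
  intro n
  induction n using Nat.strong_induction_on with
  | _ n ih =>
    rcases Nat.eq_zero_or_pos n with rfl | hn
    · have hsub : Subsingleton (Nat.Partition 0) := by
        constructor
        intro p q
        have hzero : ∀ r : Nat.Partition 0, r.parts = 0 := by
          intro r
          rw [Multiset.eq_zero_iff_forall_notMem]
          intro a ha
          have h1 := r.parts_pos ha
          have h2 := Multiset.sum_eq_zero_iff.mp r.parts_sum a ha
          omega
        exact Nat.Partition.ext ((hzero p).trans (hzero q).symm)
      exact le_trans (Fintype.card_le_one_iff_subsingleton.mpr hsub) (by norm_num)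
    · calc Fintype.card (Nat.Partition n)
          ≤ Fintype.card (Σ k : Fin n, Nat.Partition (n - 1 - k)) :=
            Fintype.card_le_of_injective _ (chop_inj hn)
        _ = ∑ k : Fin n, Fintype.card (Nat.Partition (n - 1 - (k : ℕ))) := Fintype.card_sigma
        _ ≤ ∑ k : Fin n, 2^(n - 1 - (k : ℕ)) :=
            Finset.sum_le_sum (fun k _ => ih _ (by omega))
        _ = ∑ j ∈ Finset.range n, 2^(n - 1 - j) := Fin.sum_univ_eq_sum_range (fun j => 2^(n - 1 - j)) n
        _ = ∑ j ∈ Finset.range n, 2^j := Finset.sum_range_reflect (fun j => 2^j) n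
        _ = 2^n - 1 := sum_two_pow n
        _ ≤ 2^n := Nat.sub_le _ _

end partitions

section assembly

lemma pavok_one {n : ℕ} (hn : 2 ≤ n) : PavOK 1 (∅ : Set (Set (Fin n))) := by
  refine ⟨le_refl 1, ?_, ?_, ?_, ?_⟩
  · rw [Nat.card_eq_fintype_card, Fintype.card_fin]; omega
  · intro s hs; exact absurd hs (Set.notMem_empty s)
  · intro s hs; exact absurd hs (Set.notMem_empty s)
  · intro x hx; exact absurd hx (Set.notMem_empty _)

lemma pavok_of_subtrip {n : ℕ} [NeZero n] (hn4 : 4 ≤ n) {A : Finset (Finset (Fin n))}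
    (hA : A ⊆ trip n) :
    PavOK 3 ((fun s : Finset (Fin n) => (s : Set (Fin n))) '' ↑A) := by
  refine ⟨by norm_num, ?_, ?_, ?_, ?_⟩
  · rw [Nat.card_eq_fintype_card, Fintype.card_fin]; omega
  · rintro s ⟨t, ht, rfl⟩
    rw [Set.ncard_coe_finset]
    exact trip_card_eq (hA ht)
  · rintro s ⟨t, ht, rfl⟩ s' ⟨t', ht', rfl⟩ hne
    have hne' : t ≠ t' := fun hh => hne (by rw [hh])
    exact trip_inter (hA ht) (hA ht') hne'
  · intro x hx
    obtain ⟨t, ht, hteq⟩ := hx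
    have hteq' : (↑t : Set (Fin n)) = {x} := hteq
    have h1 : (↑t : Set (Fin n)).ncard = 3 := by
      rw [Set.ncard_coe_finset]; exact trip_card_eq (hA ht)
    rw [hteq', Set.ncard_singleton] at h1
    omega

end assembly

end LMCaux

open LMCaux

/-- For `n ≥ 67`, the product of the numbers of isomorphism classes of loopless rank-1 and
rank-3 matroids on an `n`-element ground set strictly exceeds the square of the number of
isomorphism classes of loopless rank-2 matroids. -/
theorem loopless_matroid_iso_count_log_convex_start (n : ℕ) (hn : 67 ≤ n) :
    Nat.card (Quot (fun (M₁ M₂ :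
        {M : Matroid (Fin n) // M.E = Set.univ ∧ (∀ x : Fin n, M.Indep {x}) ∧
          ∀ B, M.IsBase B → B.ncard = 1}) =>
      ∃ π : Equiv.Perm (Fin n), M₂.1 = M₁.1.mapEquiv π)) *
      Nat.card (Quot (fun (M₁ M₂ :
          {M : Matroid (Fin n) // M.E = Set.univ ∧ (∀ x : Fin n, M.Indep {x}) ∧
            ∀ B, M.IsBase B → B.ncard = 3}) =>
        ∃ π : Equiv.Perm (Fin n), M₂.1 = M₁.1.mapEquiv π)) >
      Nat.card (Quot (fun (M₁ M₂ :
          {M : Matroid (Fin n) // M.E = Set.univ ∧ (∀ x : Fin n, M.Indep {x}) ∧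
            ∀ B, M.IsBase B → B.ncard = 2}) =>
        ∃ π : Equiv.Perm (Fin n), M₂.1 = M₁.1.mapEquiv π)) ^ 2 := by
  classical
  haveI : NeZero n := ⟨by omega⟩
  let P : ℕ → Matroid (Fin n) → Prop := fun k M =>
    M.E = Set.univ ∧ (∀ x : Fin n, M.Indep {x}) ∧ ∀ B, M.IsBase B → B.ncard = k
  rw [gt_iff_lt]
  show Nat.card (Quot (mrel (P := P 2))) ^ 2
      < Nat.card (Quot (mrel (P := P 1))) * Nat.card (Quot (mrel (P := P 3)))
  -- rank 1 : nonempty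
  have hne1 : Nonempty {M : Matroid (Fin n) // P 1 M} :=
    ⟨⟨pav 1 ∅ (pavok_one (by omega)), pav_prop _⟩⟩
  have h1pos : 0 < Nat.card (Quot (mrel (P := P 1))) := by
    haveI : Nonempty (Quot (mrel (P := P 1))) := Nonempty.map (Quot.mk _) hne1
    exact Nat.card_pos
  -- rank 3 : many classes
  let Φ : {S : Finset (Finset (Fin n)) // S ⊆ trip n} → {M : Matroid (Fin n) // P 3 M} :=
    fun S => ⟨pav 3 ((fun s : Finset (Fin n) => (s : Set (Fin n))) '' ↑S.1)
      (pavok_of_subtrip (by omega) S.2), pav_prop _⟩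
  have hΦinj : Function.Injective Φ := by
    intro S S' hSS
    have h3 := pav_injective (pavok_of_subtrip (by omega) S.2)
      (pavok_of_subtrip (by omega) S'.2) (congrArg Subtype.val hSS)
    apply Subtype.ext
    apply Finset.coe_injective
    exact Set.image_injective.mpr Finset.coe_injective h3
  have hcardA : Nat.card {S : Finset (Finset (Fin n)) // S ⊆ trip n}
      = 2 ^ (trip n).card := by
    rw [Nat.card_eq_fintype_card, ← Finset.card_powerset, ← Fintype.card_coe]
    exact Fintype.card_congr (Equiv.subtypeEquivRight (fun S => Finset.mem_powerset.symm))
  have main3 : 2 ^ (trip n).card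
      ≤ Nat.card (Quot (mrel (P := P 3))) * n.factorial := by
    have h4 := card_le_quot_mul_perm Φ hΦinj
    rw [hcardA] at h4
    have hperm : Nat.card (Equiv.Perm (Fin n)) = n.factorial := by
      rw [Nat.card_eq_fintype_card, Fintype.card_perm, Fintype.card_fin]
    rwa [hperm] at h4
  -- numeric comparison
  have hT6 : n*n - 3*n ≤ 6 * (trip n).card := by
    have h5 := trip_card_lb (n := n)
    omega
  have hmul : n*(n-3) = n*n - 3*n := by
    obtain ⟨k, rfl⟩ : ∃ k, n = k + 3 := ⟨n - 3, by omega⟩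
    have e : k+3-3 = k := by omega
    have h6 : (k+3)*(k+3) = (k+3)*k + 3*(k+3) := by ring
    rw [e, h6, Nat.add_sub_cancel]
  have hstrict : 2^(2*n) * n.factorial < 2 ^ (trip n).card := by
    by_contra hcon
    push_neg at hcon
    have h7 := Nat.pow_le_pow_left hcon 6
    have h8 : ((2:ℕ)^(trip n).card)^6 = 2^((trip n).card * 6) := (pow_mul 2 _ 6).symm
    have h9 : (2:ℕ)^(n*(n-3)) ≤ 2^((trip n).card * 6) := by
      apply Nat.pow_le_pow_right (by norm_num)
      rw [hmul]
      omega
    have h10 : (2:ℕ)^((trip n).card * 6) ≤ (2^(2*n) * n.factorial)^6 := by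
      rw [← h8]; exact h7
    exact absurd (lt_of_lt_of_le (keyNumeric n hn) (le_trans h9 h10)) (lt_irrefl _)
  have hQ3 : 2^(2*n) < Nat.card (Quot (mrel (P := P 3))) := by
    have h11 : 2^(2*n) * n.factorial < Nat.card (Quot (mrel (P := P 3))) * n.factorial :=
      lt_of_lt_of_le hstrict main3
    exact lt_of_mul_lt_mul_right h11 (Nat.zero_le _)
  -- rank 2 : few classes
  have hQ2 : Nat.card (Quot (mrel (P := P 2))) ≤ 2^n := by
    have h10 : Nat.card (Quot (mrel (α := Fin n) (P := IsLR2))) ≤ Nat.card (Nat.Partition n) :=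
      quot2_card_le
    have h12 : Nat.card (Nat.Partition n) ≤ 2^n := by
      rw [Nat.card_eq_fintype_card]; exact partition_card_le n
    exact le_trans h10 h12
  calc Nat.card (Quot (mrel (P := P 2))) ^ 2 ≤ (2^n)^2 := Nat.pow_le_pow_left hQ2 2
    _ = 2^(2*n) := by rw [← pow_mul, Nat.mul_comm]
    _ < Nat.card (Quot (mrel (P := P 3))) := hQ3
    _ ≤ Nat.card (Quot (mrel (P := P 1))) * Nat.card (Quot (mrel (P := P 3))) :=
        Nat.le_mul_of_pos_left _ h1pos
end

section
/- Let m be a natural number, n = 2^m − 1, and let the ground set be the set of nonzero vectors of the vector space (ZMod 2)^m, which has n elements. For r ≥ 2, let U(r) denote the collection of r-element subsets of this ground set whose elements sum to the zero vector. Then |U(3)| = C(n,3)/(n−2), |U(4)| = C(n,4)/(n−2), and for all r ≥ 4, (r+1)·|U(r+1)| = C(n,r) − |U(r)| − (n−r+1)·|U(r−1)|, where C(a,b) denotes the binomial coefficient. -/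
open Finset
def sumZeroSets (m r : ℕ) : Set (Finset (Fin m → ZMod 2)) :=
  {s | s.card = r ∧ (∀ v ∈ s, v ≠ 0) ∧ ∑ v ∈ s, v = 0}
namespace SumZeroAux
def Xs (m : ℕ) : Finset (Fin m → ZMod 2) := Finset.univ.filter (· ≠ 0)
def As (m r : ℕ) : Finset (Finset (Fin m → ZMod 2)) :=
  ((Xs m).powersetCard r).filter (fun s => ∑ v ∈ s, v = 0)
lemma add_self {m : ℕ} (v : Fin m → ZMod 2) : v + v = 0 := by
  funext i
  have h : ∀ a : ZMod 2, a + a = 0 := by decide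
  exact h _
lemma mem_Xs {m : ℕ} {v : Fin m → ZMod 2} : v ∈ Xs m ↔ v ≠ 0 := by
  simp [Xs]
lemma mem_As {m r : ℕ} {s : Finset (Fin m → ZMod 2)} :
    s ∈ As m r ↔ s ⊆ Xs m ∧ s.card = r ∧ ∑ v ∈ s, v = 0 := by
  simp [As, Finset.mem_powersetCard, and_assoc]

lemma card_Xs (m : ℕ) : (Xs m).card = 2 ^ m - 1 := by
  rw [Xs, Finset.filter_ne', Finset.card_erase_of_mem (Finset.mem_univ _)]
  simp [Finset.card_univ]

lemma ncard_eq (m r : ℕ) : (sumZeroSets m r).ncard = (As m r).card := by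
  have h : sumZeroSets m r = ↑(As m r) := by
    ext s
    simp only [sumZeroSets, Set.mem_setOf_eq, Finset.mem_coe, mem_As, Finset.subset_iff, mem_Xs]
    tauto
  rw [h, Set.ncard_coe_finset]

/-- pairs (s, x) with s an r-subset of nonzero vectors, x nonzero, sum s = x -/
def Ps (m r : ℕ) : Finset (Finset (Fin m → ZMod 2) × (Fin m → ZMod 2)) :=
  (((Xs m).powersetCard r) ×ˢ (Xs m)).filter (fun p => ∑ v ∈ p.1, v = p.2)

lemma mem_Ps {m r : ℕ} {p : Finset (Fin m → ZMod 2) × (Fin m → ZMod 2)} :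
    p ∈ Ps m r ↔ p.1 ⊆ Xs m ∧ p.1.card = r ∧ p.2 ≠ 0 ∧ ∑ v ∈ p.1, v = p.2 := by
  simp [Ps, Finset.mem_powersetCard, mem_Xs, and_assoc]

def Ds (m r : ℕ) := (Ps m r).filter (fun p => p.2 ∉ p.1)
def Es (m r : ℕ) := (Ps m r).filter (fun p => p.2 ∈ p.1)

lemma card_Ps (m r : ℕ) :
    (As m r).card + (Ps m r).card = ((Xs m).card).choose r := by
  rw [← Finset.card_powersetCard]
  have h1 : (Ps m r).card =
      (((Xs m).powersetCard r).filter (fun s => ¬ ∑ v ∈ s, v = 0)).card := by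
    apply Finset.card_nbij' (i := Prod.fst) (j := fun s => (s, ∑ v ∈ s, v))
    · intro p hp
      rw [Finset.mem_coe, mem_Ps] at hp
      simp only [Finset.mem_coe, Finset.mem_filter, Finset.mem_powersetCard]
      refine ⟨⟨hp.1, hp.2.1⟩, ?_⟩
      rw [hp.2.2.2]; exact hp.2.2.1
    · intro s hs
      simp only [Finset.mem_coe, Finset.mem_filter, Finset.mem_powersetCard] at hs
      rw [Finset.mem_coe, mem_Ps]
      exact ⟨hs.1.1, hs.1.2, hs.2, rfl⟩
    · intro p hp
      rw [Finset.mem_coe, mem_Ps] at hp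
      simp [hp.2.2.2]
    · intro s _; rfl
  rw [h1, As, Finset.card_filter_add_card_filter_not]

lemma card_split (m r : ℕ) : (Es m r).card + (Ds m r).card = (Ps m r).card :=
  Finset.card_filter_add_card_filter_not _

lemma card_Ds (m r : ℕ) : (Ds m r).card = (r + 1) * (As m (r + 1)).card := by
  have hmaps : ∀ p ∈ Ds m r, insert p.2 p.1 ∈ As m (r + 1) := by
    intro p hp
    simp only [Ds, Finset.mem_filter, mem_Ps] at hp
    obtain ⟨⟨hsub, hcard, hx0, hsum⟩, hnot⟩ := hp
    rw [mem_As]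
    refine ⟨?_, ?_, ?_⟩
    · exact Finset.insert_subset (mem_Xs.2 hx0) hsub
    · rw [Finset.card_insert_of_notMem hnot, hcard]
    · rw [Finset.sum_insert hnot, hsum, add_self]
  rw [Finset.card_eq_sum_card_fiberwise hmaps]
  rw [Finset.sum_congr rfl (fun t ht => ?_), Finset.sum_const, smul_eq_mul, mul_comm]
  -- fiber over t has card t.card = r + 1
  rw [mem_As] at ht
  obtain ⟨htsub, htcard, htsum⟩ := ht
  have : ((Ds m r).filter (fun p => insert p.2 p.1 = t)).card = t.card := by
    apply Finset.card_nbij' (i := Prod.snd) (j := fun x => (t.erase x, x))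
    · intro p hp
      simp only [Finset.mem_coe, Finset.mem_filter] at hp ⊢
      rw [← hp.2]; exact Finset.mem_insert_self _ _
    · intro x hx
      rw [Finset.mem_coe] at hx
      simp only [Finset.mem_coe, Finset.mem_filter, Ds, mem_Ps]
      have hx0 : x ≠ 0 := mem_Xs.1 (htsub hx)
      have hesum : ∑ v ∈ t.erase x, v = x := by
        have h := Finset.sum_erase_add t (fun v => v) hx
        rw [htsum] at h
        calc ∑ v ∈ t.erase x, v = ∑ v ∈ t.erase x, v + (x + x) := by rw [add_self, add_zero]
          _ = (∑ v ∈ t.erase x, v + x) + x := by ring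
          _ = x := by rw [h, zero_add]
      refine ⟨⟨⟨?_, ?_, hx0, hesum⟩, Finset.notMem_erase _ _⟩, ?_⟩
      · exact (Finset.erase_subset _ _).trans htsub
      · rw [Finset.card_erase_of_mem hx, htcard]; rfl
      · exact Finset.insert_erase hx
    · intro p hp
      simp only [Finset.mem_coe, Finset.mem_filter, Ds, mem_Ps] at hp
      obtain ⟨⟨⟨_, _, _, _⟩, hnot⟩, heq⟩ := hp
      rw [← heq]; beta_reduce; rw [Finset.erase_insert hnot]
    · intro x _; rfl
  rw [this, htcard]

lemma card_Es (m r : ℕ) : (Es m (r + 1)).card = (As m r).card * ((Xs m).card - r) := by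
  have h1 : (Es m (r + 1)).card =
      (((As m r) ×ˢ (Xs m)).filter (fun p => p.2 ∉ p.1)).card := by
    apply Finset.card_nbij' (i := fun p => (p.1.erase p.2, p.2))
      (j := fun p => (insert p.2 p.1, p.2))
    · intro p hp
      simp only [Finset.mem_coe, Es, Finset.mem_filter, mem_Ps] at hp
      obtain ⟨⟨hsub, hcard, hx0, hsum⟩, hmem⟩ := hp
      simp only [Finset.mem_coe, Finset.mem_filter, Finset.mem_product, mem_As]
      refine ⟨⟨⟨(Finset.erase_subset _ _).trans hsub, ?_, ?_⟩, mem_Xs.2 hx0⟩,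
        Finset.notMem_erase _ _⟩
      · rw [Finset.card_erase_of_mem hmem, hcard]; rfl
      · have h := Finset.sum_erase_add p.1 (fun v => v) hmem
        rw [hsum] at h
        calc ∑ v ∈ p.1.erase p.2, v
            = (∑ v ∈ p.1.erase p.2, v + p.2) + p.2 := by
              rw [add_assoc, add_self, add_zero]
          _ = p.2 + p.2 := by rw [h]
          _ = 0 := add_self _
    · intro p hp
      simp only [Finset.mem_coe, Finset.mem_filter, Finset.mem_product, mem_As, mem_Xs] at hp
      obtain ⟨⟨⟨hsub, hcard, hsum⟩, hx0⟩, hnot⟩ := hp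
      simp only [Finset.mem_coe, Es, Finset.mem_filter, mem_Ps]
      refine ⟨⟨Finset.insert_subset (mem_Xs.2 hx0) hsub, ?_, hx0, ?_⟩,
        Finset.mem_insert_self _ _⟩
      · rw [Finset.card_insert_of_notMem hnot, hcard]
      · rw [Finset.sum_insert hnot, hsum, add_zero]
    · intro p hp
      simp only [Finset.mem_coe, Es, Finset.mem_filter] at hp
      simp [Finset.insert_erase hp.2]
    · intro p hp
      simp only [Finset.mem_coe, Finset.mem_filter, Finset.mem_product] at hp
      simp [Finset.erase_insert hp.2]
  rw [h1]
  have hmaps : ∀ p ∈ ((As m r) ×ˢ (Xs m)).filter (fun p => p.2 ∉ p.1),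
      p.1 ∈ As m r := by
    intro p hp
    simp only [Finset.mem_filter, Finset.mem_product] at hp
    exact hp.1.1
  rw [Finset.card_eq_sum_card_fiberwise hmaps]
  rw [Finset.sum_congr rfl (fun t ht => ?_), Finset.sum_const, smul_eq_mul]
  rw [mem_As] at ht
  obtain ⟨htsub, htcard, htsum⟩ := ht
  have : ((((As m r) ×ˢ (Xs m)).filter (fun p => p.2 ∉ p.1)).filter
      (fun p => p.1 = t)).card = (Xs m \ t).card := by
    apply Finset.card_nbij' (i := Prod.snd) (j := fun x => (t, x))
    · intro p hp
      simp only [Finset.mem_coe, Finset.mem_filter, Finset.mem_product] at hp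
      rw [Finset.mem_coe, Finset.mem_sdiff]
      exact ⟨hp.1.1.2, by rw [← hp.2]; exact hp.1.2⟩
    · intro x hx
      rw [Finset.mem_coe, Finset.mem_sdiff] at hx
      exact Finset.mem_filter.2 ⟨Finset.mem_filter.2 ⟨Finset.mem_product.2
        ⟨mem_As.2 ⟨htsub, htcard, htsum⟩, hx.1⟩, hx.2⟩, rfl⟩
    · intro p hp
      simp only [Finset.mem_coe, Finset.mem_filter] at hp
      rw [← hp.2]
    · intro x _; rfl
  rw [this, Finset.card_sdiff_of_subset htsub, htcard]
lemma As_one (m : ℕ) : (As m 1).card = 0 := by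
  rw [Finset.card_eq_zero, Finset.eq_empty_iff_forall_notMem]
  intro s hs
  rw [mem_As] at hs
  obtain ⟨hsub, hcard, hsum⟩ := hs
  obtain ⟨a, rfl⟩ := Finset.card_eq_one.1 hcard
  rw [Finset.sum_singleton] at hsum
  exact mem_Xs.1 (hsub (Finset.mem_singleton_self a)) hsum

lemma As_two (m : ℕ) : (As m 2).card = 0 := by
  rw [Finset.card_eq_zero, Finset.eq_empty_iff_forall_notMem]
  intro s hs
  rw [mem_As] at hs
  obtain ⟨hsub, hcard, hsum⟩ := hs
  obtain ⟨a, b, hab, rfl⟩ := Finset.card_eq_two.1 hcard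
  rw [Finset.sum_pair hab] at hsum
  apply hab
  have := add_self a
  calc a = a + (b + b) := by rw [add_self, add_zero]
    _ = (a + b) + b := by ring
    _ = b := by rw [hsum, zero_add]

/-- master counting identity, in ℕ -/
lemma master (m r : ℕ) :
    (r + 2) * (As m (r + 2)).card + (As m (r + 1)).card
      + (As m r).card * ((Xs m).card - r) = ((Xs m).card).choose (r + 1) := by
  have h1 := card_Ps m (r + 1)
  have h2 : (Ds m (r + 1)).card = (r + 2) * (As m (r + 2)).card := card_Ds m (r + 1)
  have h3 := card_Es m r
  have h4 := card_split m (r + 1)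
  omega

lemma As_card_le (m r : ℕ) : (As m r).card ≤ ((Xs m).card).choose r := by
  rw [← Finset.card_powersetCard]
  exact Finset.card_le_card (Finset.filter_subset _ _)

/-- master counting identity, in ℤ -/
lemma master_int (m k : ℕ) :
    ((k : ℤ) + 2) * (As m (k + 2)).card =
      ((((Xs m).card).choose (k + 1) : ℕ) : ℤ) - (As m (k + 1)).card
        - (((Xs m).card : ℤ) - (k + 1) + 1) * (As m k).card := by
  have h := master m k
  by_cases hk : k ≤ (Xs m).card
  · have hcast : (((Xs m).card - k : ℕ) : ℤ) = ((Xs m).card : ℤ) - k := by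
      omega
    have := congrArg (fun x : ℕ => (x : ℤ)) h
    push_cast at this
    rw [hcast] at this
    linarith
  · push_neg at hk
    have h0 : (As m k).card = 0 := by
      have := As_card_le m k
      rw [Nat.choose_eq_zero_of_lt hk] at this
      omega
    have h1 : (As m (k + 1)).card = 0 := by
      have := As_card_le m (k + 1)
      rw [Nat.choose_eq_zero_of_lt (by omega)] at this
      omega
    have h2 : (As m (k + 2)).card = 0 := by
      have := As_card_le m (k + 2)
      rw [Nat.choose_eq_zero_of_lt (by omega)] at this
      omega
    have h3 : ((Xs m).card).choose (k + 1) = 0 := Nat.choose_eq_zero_of_lt (by omega)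
    rw [h0, h1, h2, h3]
    push_cast
    ring

lemma three_u3 (m : ℕ) : 3 * (As m 3).card = ((Xs m).card).choose 2 := by
  have h : (1 + 2) * (As m 3).card + (As m 2).card
      + (As m 1).card * ((Xs m).card - 1) = ((Xs m).card).choose 2 := master m 1
  rw [As_one m, As_two m] at h
  omega

lemma four_u4 (m : ℕ) : 4 * (As m 4).card + (As m 3).card = ((Xs m).card).choose 3 := by
  have h : (2 + 2) * (As m 4).card + (As m 3).card
      + (As m 2).card * ((Xs m).card - 2) = ((Xs m).card).choose 3 := master m 2
  rw [As_two m] at h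
  omega

end SumZeroAux

/-- With `n = 2^m - 1`: `|U(3)| = C(n,3)/(n-2)`, `|U(4)| = C(n,4)/(n-2)`, and for `r ≥ 4`,
`(r+1)·|U(r+1)| = C(n,r) - |U(r)| - (n-r+1)·|U(r-1)|`. -/
theorem sumZeroSets_card_recursion (m n : ℕ) (hn : n = 2 ^ m - 1) :
    (sumZeroSets m 3).ncard = n.choose 3 / (n - 2) ∧
    (sumZeroSets m 4).ncard = n.choose 4 / (n - 2) ∧
    ∀ r : ℕ, 4 ≤ r →
      ((r : ℤ) + 1) * (sumZeroSets m (r + 1)).ncard =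
        (n.choose r : ℤ) - (sumZeroSets m r).ncard -
          ((n : ℤ) - r + 1) * (sumZeroSets m (r - 1)).ncard := by
  have hN : (SumZeroAux.Xs m).card = n := by rw [SumZeroAux.card_Xs, hn]
  set u : ℕ → ℕ := fun r => (SumZeroAux.As m r).card with hu
  have hnc : ∀ r, (sumZeroSets m r).ncard = u r :=
    fun r => SumZeroAux.ncard_eq m r
  have h3 : 3 * u 3 = n.choose 2 := by rw [← hN]; exact SumZeroAux.three_u3 m
  have h4 : 4 * u 4 + u 3 = n.choose 3 := by rw [← hN]; exact SumZeroAux.four_u4 m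
  have hcase : n ≤ 1 ∨ 3 ≤ n := by
    rcases Nat.lt_or_ge m 2 with h | h
    · interval_cases m <;> omega
    · right
      have : 2 ^ 2 ≤ 2 ^ m := Nat.pow_le_pow_right (by norm_num) h
      omega
  rcases hcase with hsmall | hbig
  · -- n ≤ 1 : everything is zero
    have hc2 : n.choose 2 = 0 := Nat.choose_eq_zero_of_lt (by omega)
    have hc3 : n.choose 3 = 0 := Nat.choose_eq_zero_of_lt (by omega)
    have hc4 : n.choose 4 = 0 := Nat.choose_eq_zero_of_lt (by omega)
    have hu3 : u 3 = 0 := by omega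
    have hu4 : u 4 = 0 := by omega
    refine ⟨?_, ?_, ?_⟩
    · rw [hnc, hu3, hc3, Nat.zero_div]
    · rw [hnc, hu4, hc4, Nat.zero_div]
    · intro r hr
      obtain ⟨k, rfl⟩ : ∃ k, r = k + 1 := ⟨r - 1, by omega⟩
      have hm := SumZeroAux.master_int m k
      rw [hN] at hm
      simp only [hnc, Nat.add_sub_cancel]
      push_cast

      linarith
  · -- n ≥ 3
    have hcs3 : n.choose 3 * 3 = n.choose 2 * (n - 2) := Nat.choose_succ_right_eq n 2
    have hmul3 : (n - 2) * u 3 = n.choose 3 := by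
      apply Nat.eq_of_mul_eq_mul_left (show 0 < 3 by norm_num)
      calc 3 * ((n - 2) * u 3) = (n - 2) * (3 * u 3) := by ring
        _ = (n - 2) * n.choose 2 := by rw [h3]
        _ = n.choose 2 * (n - 2) := mul_comm _ _
        _ = n.choose 3 * 3 := hcs3.symm
        _ = 3 * n.choose 3 := mul_comm _ _
    have hexp : (n - 2) * u 3 = (n - 3) * u 3 + u 3 := by
      have h' : n - 2 = (n - 3) + 1 := by omega
      rw [h']; ring
    have h44 : 4 * u 4 = (n - 3) * u 3 := by omega
    have hcs4 : n.choose 4 * 4 = n.choose 3 * (n - 3) := Nat.choose_succ_right_eq n 3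
    have hmul4 : (n - 2) * u 4 = n.choose 4 := by
      apply Nat.eq_of_mul_eq_mul_left (show 0 < 4 by norm_num)
      calc 4 * ((n - 2) * u 4) = (n - 2) * (4 * u 4) := by ring
        _ = (n - 2) * ((n - 3) * u 3) := by rw [h44]
        _ = (n - 3) * ((n - 2) * u 3) := by ring
        _ = (n - 3) * n.choose 3 := by rw [hmul3]
        _ = n.choose 3 * (n - 3) := mul_comm _ _
        _ = n.choose 4 * 4 := hcs4.symm
        _ = 4 * n.choose 4 := mul_comm _ _
    refine ⟨?_, ?_, ?_⟩
    · rw [hnc, ← hmul3, Nat.mul_div_cancel_left _ (by omega : 0 < n - 2)]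
    · rw [hnc, ← hmul4, Nat.mul_div_cancel_left _ (by omega : 0 < n - 2)]
    · intro r hr
      obtain ⟨k, rfl⟩ : ∃ k, r = k + 1 := ⟨r - 1, by omega⟩
      have hm := SumZeroAux.master_int m k
      rw [hN] at hm
      simp only [hnc, Nat.add_sub_cancel]
      push_cast

      linarith
end

section
/- Let m be a natural number with 2^m − 1 = n, identify the ground set with the set of nonzero vectors of (ZMod 2)^m, and for r ≥ 2 let U(r) be the collection of r-element subsets of the ground set whose elements sum to the zero vector. Then for every r with 4 ≤ r < n, the number of rank-r paving matroids on this n-element ground set is at least 2^{|U(r)|}. -/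
/-- The collection of `r`-element sets of nonzero vectors of `(ZMod 2)^m` whose elements
sum to the zero vector, as sets of the type of nonzero vectors. -/
def sumZeroSubsets (m r : ℕ) : Set (Finset {v : Fin m → ZMod 2 // v ≠ 0}) :=
  {s | s.card = r ∧ ∑ v ∈ s, (v : Fin m → ZMod 2) = 0}

open Set

abbrev NZVec (m : ℕ) := {v : Fin m → ZMod 2 // v ≠ 0}

/-- The independence predicate of the sparse paving matroid with circuit-hyperplanes `A`. -/
def pavIndep (m r : ℕ) (A : Set (Finset (NZVec m))) (I : Set (NZVec m)) : Prop :=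
  I.ncard ≤ r ∧ ∀ s ∈ A, (s : Set (NZVec m)) ≠ I

lemma card_NZVec (m : ℕ) : Nat.card (NZVec m) = 2 ^ m - 1 := by
  rw [Nat.card_eq_fintype_card]
  have h1 : Fintype.card {v : Fin m → ZMod 2 // v = 0} = 1 := Fintype.card_subtype_eq 0
  have h2 : Fintype.card (NZVec m) =
      Fintype.card (Fin m → ZMod 2) - Fintype.card {v : Fin m → ZMod 2 // v = 0} :=
    Fintype.card_subtype_compl _
  rw [h2, h1, Fintype.card_fun, ZMod.card, Fintype.card_fin]

/-- Uniqueness of the completion of a set to a zero-sum set. -/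
lemma pav_key {m r : ℕ} {s s' : Finset (NZVec m)} (hs : s ∈ sumZeroSubsets m r)
    (hs' : s' ∈ sumZeroSubsets m r) {I : Set (NZVec m)} {e e' : NZVec m}
    (he : e ∉ I) (he' : e' ∉ I) (hes : (s : Set (NZVec m)) = insert e I)
    (hes' : (s' : Set (NZVec m)) = insert e' I) : e = e' := by
  have hIfin : I.Finite := Set.toFinite I
  have hFc : (hIfin.toFinset : Set (NZVec m)) = I := hIfin.coe_toFinset
  have h1 : s = insert e hIfin.toFinset := Finset.coe_injective (by rw [Finset.coe_insert, hFc, hes])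
  have h2 : s' = insert e' hIfin.toFinset :=
    Finset.coe_injective (by rw [Finset.coe_insert, hFc, hes'])
  have heF : e ∉ hIfin.toFinset := by rwa [hIfin.mem_toFinset]
  have he'F : e' ∉ hIfin.toFinset := by rwa [hIfin.mem_toFinset]
  have hsum : (e : Fin m → ZMod 2) + ∑ v ∈ hIfin.toFinset, (v : Fin m → ZMod 2) = 0 := by
    rw [← Finset.sum_insert heF, ← h1]; exact hs.2
  have hsum' : (e' : Fin m → ZMod 2) + ∑ v ∈ hIfin.toFinset, (v : Fin m → ZMod 2) = 0 := by
    rw [← Finset.sum_insert he'F, ← h2]; exact hs'.2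
  exact Subtype.ext (add_right_cancel (hsum.trans hsum'.symm))

lemma pavIndep_subset {m r : ℕ} {A : Set (Finset (NZVec m))} (hA : A ⊆ sumZeroSubsets m r)
    ⦃I J : Set (NZVec m)⦄ (hJ : pavIndep m r A J) (hIJ : I ⊆ J) : pavIndep m r A I := by
  obtain ⟨hJr, hJs⟩ := hJ
  have hle : I.ncard ≤ J.ncard := Set.ncard_le_ncard hIJ (Set.toFinite J)
  refine ⟨hle.trans hJr, fun s hsA hsI => ?_⟩
  have hIr : I.ncard = r := by rw [← hsI, Set.ncard_coe_finset]; exact (hA hsA).1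
  have : I = J := Set.eq_of_subset_of_ncard_le hIJ (by omega) (Set.toFinite J)
  exact hJs s hsA (hsI.trans this)

/-- The failure of independence for an insertion forces the inserted set to be in `A`. -/
lemma pav_not_indep {m r : ℕ} {A : Set (Finset (NZVec m))} {I : Set (NZVec m)} {e : NZVec m}
    (hI : pavIndep m r A I) (he : e ∉ I) (hcard : I.ncard + 1 ≤ r)
    (h : ¬ pavIndep m r A (insert e I)) : ∃ s ∈ A, (s : Set (NZVec m)) = insert e I := by
  rw [pavIndep] at h
  push_neg at h
  rcases h (by rw [Set.ncard_insert_of_notMem he (Set.toFinite I)]; exact hcard)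
    with ⟨s, hsA, hs⟩
  exact ⟨s, hsA, hs⟩

lemma pavIndep_extend {m r : ℕ} (hrn : r < 2 ^ m - 1)
    {A : Set (Finset (NZVec m))} (hA : A ⊆ sumZeroSubsets m r)
    {I : Set (NZVec m)} (hI : pavIndep m r A I) (hlt : I.ncard < r) :
    ∃ e ∉ I, pavIndep m r A (insert e I) := by
  have hcard : ((univ : Set (NZVec m)) \ I).ncard = (2 ^ m - 1) - I.ncard := by
    rw [Set.ncard_diff (Set.subset_univ I), Set.ncard_univ, card_NZVec]
  have h2 : 1 < ((univ : Set (NZVec m)) \ I).ncard := by omega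
  rw [Set.one_lt_ncard (Set.toFinite _)] at h2
  obtain ⟨e, he, e', he', hee⟩ := h2
  have heI : e ∉ I := he.2
  have he'I : e' ∉ I := he'.2
  by_cases h1 : pavIndep m r A (insert e I)
  · exact ⟨e, heI, h1⟩
  by_cases h2 : pavIndep m r A (insert e' I)
  · exact ⟨e', he'I, h2⟩
  obtain ⟨s, hsA, hs⟩ := pav_not_indep hI heI (by omega) h1
  obtain ⟨s', hs'A, hs'⟩ := pav_not_indep hI he'I (by omega) h2
  exact absurd (pav_key (hA hsA) (hA hs'A) heI he'I hs hs') hee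

lemma pavIndep_aug {m r : ℕ} {A : Set (Finset (NZVec m))} (hA : A ⊆ sumZeroSubsets m r)
    ⦃I J : Set (NZVec m)⦄ (hI : pavIndep m r A I) (hJ : pavIndep m r A J)
    (hIJ : I.ncard < J.ncard) : ∃ e ∈ J, e ∉ I ∧ pavIndep m r A (insert e I) := by
  by_contra hcon
  push_neg at hcon
  -- every element of J \ I yields a member of A
  have hstep : ∀ e ∈ J \ I, ∃ s ∈ A, (s : Set (NZVec m)) = insert e I := by
    intro e he
    have hJr := hJ.1
    exact pav_not_indep hI he.2 (by omega) (hcon e he.1 he.2)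
  -- J \ I is a subsingleton
  have hsub : ∀ e ∈ J \ I, ∀ e' ∈ J \ I, e = e' := by
    intro e he e' he'
    obtain ⟨s, hsA, hs⟩ := hstep e he
    obtain ⟨s', hs'A, hs'⟩ := hstep e' he'
    exact pav_key (hA hsA) (hA hs'A) he.2 he'.2 hs hs'
  have hne : (J \ I).Nonempty := by
    by_contra hcc
    rw [Set.not_nonempty_iff_eq_empty, Set.diff_eq_empty] at hcc
    exact absurd (Set.ncard_le_ncard hcc (Set.toFinite I)) (by omega)
  obtain ⟨e, he⟩ := hne
  have hJI : J \ I = {e} := by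
    apply Set.eq_singleton_iff_unique_mem.2 ⟨he, fun x hx => hsub x hx e he⟩
  have hd : (J \ I).ncard = 1 := by rw [hJI, Set.ncard_singleton]
  have hinter : (J ∩ I).ncard + (J \ I).ncard = J.ncard :=
    Set.ncard_inter_add_ncard_diff_eq_ncard J I (Set.toFinite J)
  have hJIsub : J ∩ I ⊆ I := Set.inter_subset_right
  have hIsub : I ⊆ J := by
    have : J ∩ I = I := Set.eq_of_subset_of_ncard_le hJIsub (by
      have := Set.ncard_le_ncard hJIsub (Set.toFinite I); omega) (Set.toFinite I)
    rw [← this]; exact Set.inter_subset_left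
  have hJeq : J = insert e I := by
    rw [Set.insert_eq]
    have : J = (J \ I) ∪ I := by
      rw [Set.diff_union_self, Set.union_eq_self_of_subset_right hIsub]
    rw [this, hJI]
  obtain ⟨s, hsA, hs⟩ := hstep e he
  exact hJ.2 s hsA (hs.trans hJeq.symm)

/-- The sparse paving matroid determined by `A ⊆ sumZeroSubsets m r`. -/
noncomputable def pavMatroid (m r : ℕ) (hr : 4 ≤ r) (hrn : r < 2 ^ m - 1)
    (A : Set (Finset (NZVec m))) (hA : A ⊆ sumZeroSubsets m r) : Matroid (NZVec m) :=
  (IndepMatroid.ofFinite (Set.finite_univ) (pavIndep m r A)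
    (by
      refine ⟨by simp, fun s hsA hs => ?_⟩
      have : (s : Set (NZVec m)).ncard = r := by rw [Set.ncard_coe_finset]; exact (hA hsA).1
      rw [hs] at this
      simp at this; omega)
    (pavIndep_subset hA)
    (fun I J hI hJ hIJ => by
      obtain ⟨e, heJ, heI, h⟩ := pavIndep_aug hA hI hJ hIJ
      exact ⟨e, heJ, heI, h⟩)
    (fun I _ => Set.subset_univ I)).matroid

lemma pavMatroid_indep {m r : ℕ} (hr : 4 ≤ r) (hrn : r < 2 ^ m - 1)
    {A : Set (Finset (NZVec m))} (hA : A ⊆ sumZeroSubsets m r) (I : Set (NZVec m)) :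
    (pavMatroid m r hr hrn A hA).Indep I ↔ pavIndep m r A I := Iff.rfl

lemma pavMatroid_base_ncard {m r : ℕ} (hr : 4 ≤ r) (hrn : r < 2 ^ m - 1)
    {A : Set (Finset (NZVec m))} (hA : A ⊆ sumZeroSubsets m r) {B : Set (NZVec m)}
    (hB : (pavMatroid m r hr hrn A hA).IsBase B) : B.ncard = r := by
  have hBi : pavIndep m r A B := (pavMatroid_indep hr hrn hA B).1 hB.indep
  rcases lt_or_eq_of_le hBi.1 with hlt | heq
  · obtain ⟨e, heB, hins⟩ := pavIndep_extend hrn hA hBi hlt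
    have := hB.eq_of_subset_indep ((pavMatroid_indep hr hrn hA _).2 hins)
      (Set.subset_insert e B)
    exact absurd (this ▸ Set.mem_insert e B) heB
  · exact heq

lemma mem_iff_not_pavIndep {m r : ℕ} {A : Set (Finset (NZVec m))}
    (hA : A ⊆ sumZeroSubsets m r) {s : Finset (NZVec m)} (hs : s ∈ sumZeroSubsets m r) :
    s ∈ A ↔ ¬ pavIndep m r A (↑s : Set (NZVec m)) := by
  constructor
  · intro hsA h
    exact h.2 s hsA rfl
  · intro h
    rw [pavIndep] at h
    push_neg at h
    obtain ⟨s', hs'A, hs'⟩ := h (by rw [Set.ncard_coe_finset]; exact hs.1.le)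
    rwa [Finset.coe_inj.1 hs'] at hs'A

instance matroid_finite {α : Type*} [Finite α] : Finite (Matroid α) := by
  have : Finite (Set α × (Set α → Prop) × (Set α → Prop)) := by infer_instance
  refine Finite.of_injective (fun M : Matroid α => (M.E, M.IsBase, M.Indep)) ?_
  intro M M' h
  rw [Prod.ext_iff, Prod.ext_iff] at h
  exact Matroid.ext h.1 h.2.1 h.2.2

/-- With the ground set identified with the nonzero vectors of `(ZMod 2)^m` (of size
`n = 2^m - 1`), for `4 ≤ r < n` the number of labeled rank-`r` paving matroids on this
ground set is at least `2 ^ |U(r)|`. -/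
theorem paving_matroid_count_ge_two_pow (m n r : ℕ) (hn : n = 2 ^ m - 1)
    (hr : 4 ≤ r) (hrn : r < n) :
    2 ^ (sumZeroSubsets m r).ncard ≤
      Nat.card {M : Matroid {v : Fin m → ZMod 2 // v ≠ 0} //
        M.E = Set.univ ∧ (∀ B, M.IsBase B → B.ncard = r) ∧
        ∀ S : Set {v : Fin m → ZMod 2 // v ≠ 0}, S.ncard = r - 1 → M.Indep S} := by
  subst hn
  set U := sumZeroSubsets m r with hU
  -- the map from subsets of U to paving matroids
  have hsub : ∀ B : Set ↥U, (Subtype.val '' B) ⊆ U := by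
    rintro B s ⟨t, _, rfl⟩; exact t.2
  set f : Set ↥U → {M : Matroid (NZVec m) //
      M.E = Set.univ ∧ (∀ B, M.IsBase B → B.ncard = r) ∧
      ∀ S : Set (NZVec m), S.ncard = r - 1 → M.Indep S} :=
    fun B => ⟨pavMatroid m r hr hrn (Subtype.val '' B) (hsub B),
      rfl,
      fun C hC => pavMatroid_base_ncard hr hrn (hsub B) hC,
      fun S hS => (pavMatroid_indep hr hrn (hsub B) S).2
        ⟨by omega, fun s hsA hss => by
          have : S.ncard = r := by rw [← hss, Set.ncard_coe_finset]; exact (hsub B hsA).1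
          omega⟩⟩ with hf
  have hinj : Function.Injective f := by
    intro B B' h
    have hMM : pavMatroid m r hr hrn (Subtype.val '' B) (hsub B) =
        pavMatroid m r hr hrn (Subtype.val '' B') (hsub B') := congrArg Subtype.val h
    ext s
    have hcalc : s.1 ∈ Subtype.val '' B ↔ s.1 ∈ Subtype.val '' B' := by
      rw [mem_iff_not_pavIndep (hsub B) s.2, mem_iff_not_pavIndep (hsub B') s.2,
        ← pavMatroid_indep hr hrn (hsub B), ← pavMatroid_indep hr hrn (hsub B'), hMM]
    rw [Subtype.val_injective.mem_set_image, Subtype.val_injective.mem_set_image] at hcalc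
    exact hcalc
  have hle : Nat.card (Set ↥U) ≤ Nat.card {M : Matroid (NZVec m) //
      M.E = Set.univ ∧ (∀ B, M.IsBase B → B.ncard = r) ∧
      ∀ S : Set (NZVec m), S.ncard = r - 1 → M.Indep S} :=
    Nat.card_le_card_of_injective f hinj
  have hcard : Nat.card (Set ↥U) = 2 ^ U.ncard := by
    have hP : Nat.card Prop = 2 := by rw [Nat.card_eq_fintype_card]; rfl
    have : Nat.card (Set ↥U) = Nat.card Prop ^ Nat.card ↥U := Nat.card_fun
    rw [this, hP, Nat.card_coe_set_eq]
  rw [← hcard]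
  exact hle
end

section
/- Fix a finite ground set E of size n. Say a simple rank-4 matroid M on E satisfies the points-lines-planes inequality if W_2(M)^2 ≥ (3(W_1(M) − 1) / (2(W_1(M) − 2))) · W_1(M) · W_3(M), where W_k(M) is the number of rank-k flats of M. Then every simple rank-4 matroid on E satisfies the points-lines-planes inequality if and only if every simple rank-4 matroid N on E with the property that W_3(N) ≥ W_3(N') for all rank-4 matroids N' on E whose truncation to rank 3 equals the truncation of N to rank 3, satisfies the points-lines-planes inequality. -/
/-- `F` is a flat of rank `k` in `M`: it is a flat and it is spanned by an independent
subset of size `k`. -/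
def IsFlatOfRank {α : Type*} (M : Matroid α) (F : Set α) (k : ℕ) : Prop :=
  M.IsFlat F ∧ ∃ I ⊆ F, M.Indep I ∧ I.ncard = k ∧ F ⊆ M.closure I

/-- `W k M`, the `k`-th Whitney number of the second kind: the number of rank-`k` flats
of `M`. -/
noncomputable def whitney {α : Type*} (M : Matroid α) (k : ℕ) : ℕ :=
  Nat.card {F : Set α // IsFlatOfRank M F k}

/-- The points-lines-planes inequality for a (simple, rank-4) matroid `M`:
`W₂(M)² ≥ (3(W₁(M)-1) / (2(W₁(M)-2))) · W₁(M) · W₃(M)`. -/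
def PLPIneq {α : Type*} (M : Matroid α) : Prop :=
  (whitney M 2 : ℝ) ^ 2 ≥
    3 * ((whitney M 1 : ℝ) - 1) / (2 * ((whitney M 1 : ℝ) - 2)) *
      (whitney M 1 : ℝ) * (whitney M 3 : ℝ)

section Aux

variable {n : ℕ}

lemma PLP.closure_eq_of_trunc (M N : Matroid (Fin n)) (hME : M.E = Set.univ)
    (hNE : N.E = Set.univ)
    (T : ∀ I : Set (Fin n), (M.Indep I ∧ I.ncard ≤ 3) ↔ (N.Indep I ∧ I.ncard ≤ 3))
    (I : Set (Fin n)) (hI : M.Indep I) (hcard : I.ncard ≤ 2) :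
    M.closure I = N.closure I := by
  have hNI : N.Indep I := ((T I).1 ⟨hI, hcard.trans (by norm_num)⟩).1
  ext x
  rw [hI.mem_closure_iff, hNI.mem_closure_iff]
  have hins : (insert x I).ncard ≤ 3 := by
    have := Set.ncard_insert_le x I
    omega
  have hiff : M.Indep (insert x I) ↔ N.Indep (insert x I) := by
    constructor
    · intro h; exact ((T _).1 ⟨h, hins⟩).1
    · intro h; exact ((T _).2 ⟨h, hins⟩).1
  rw [Matroid.dep_iff, Matroid.dep_iff, hME, hNE, hiff]

lemma PLP.flat_closure (M : Matroid (Fin n)) (X : Set (Fin n)) : M.IsFlat (M.closure X) :=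
  ⟨fun _ _ hIF hIY => hIY.subset_closure.trans_eq (hIF.closure_eq_right),
    M.closure_subset_ground X⟩

lemma PLP.flat_transfer (M N : Matroid (Fin n)) (hME : M.E = Set.univ)
    (hNE : N.E = Set.univ)
    (T : ∀ I : Set (Fin n), (M.Indep I ∧ I.ncard ≤ 3) ↔ (N.Indep I ∧ I.ncard ≤ 3))
    (k : ℕ) (hk : k ≤ 2) (F : Set (Fin n)) (h : IsFlatOfRank M F k) :
    IsFlatOfRank N F k := by
  obtain ⟨hF, I, hIF, hInd, hc, hsub⟩ := h
  have hFeq : F = M.closure I :=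
    hsub.antisymm ((M.closure_subset_closure hIF).trans_eq hF.closure)
  have hcl : M.closure I = N.closure I :=
    PLP.closure_eq_of_trunc M N hME hNE T I hInd (hc ▸ hk)
  have hNI : N.Indep I := ((T I).1 ⟨hInd, by omega⟩).1
  refine ⟨?_, I, hIF, hNI, hc, by rw [hFeq, hcl]⟩
  rw [hFeq, hcl]; exact PLP.flat_closure N I

lemma PLP.whitney_one_ge (M : Matroid (Fin n)) (hME : M.E = Set.univ)
    (hsimp : ∀ x y : Fin n, M.Indep {x, y})
    (hrank : ∀ B, M.IsBase B → B.ncard = 4) :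
    4 ≤ whitney M 1 := by
  obtain ⟨B, hB⟩ := M.exists_isBase
  have hBc : B.ncard = 4 := hrank B hB
  have hsing : ∀ b : Fin n, IsFlatOfRank M {b} 1 := by
    intro b
    have hIb : M.Indep {b} := by simpa using hsimp b b
    have hcl : M.closure {b} = {b} := by
      apply Set.Subset.antisymm
      · intro y hy
        rw [hIb.mem_closure_iff] at hy
        rcases hy with hy | hy
        · exact absurd (hsimp y b) hy.not_indep
        · exact hy
      · exact M.subset_closure {b} (by rw [hME]; exact Set.subset_univ _)
    refine ⟨hcl ▸ PLP.flat_closure M {b}, {b}, le_refl _, hIb, Set.ncard_singleton b, ?_⟩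
    rw [hcl]
  have hinj : Function.Injective
      (fun b : B => (⟨{b.1}, hsing b.1⟩ : {F : Set (Fin n) // IsFlatOfRank M F 1})) := by
    intro a b hab
    simp only [Subtype.mk.injEq, Set.singleton_eq_singleton_iff] at hab
    exact Subtype.ext hab
  have := Nat.card_le_card_of_injective _ hinj
  rwa [Nat.card_coe_set_eq, hBc] at this

lemma PLP.whitney_le (M : Matroid (Fin n)) (k : ℕ) :
    whitney M k ≤ Nat.card (Set (Fin n)) :=
  Nat.card_le_card_of_injective Subtype.val Subtype.val_injective

end Aux

/-- The points-lines-planes conjecture holds for all simple rank-4 matroids on a fixed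
`n`-element ground set iff it holds for all simple rank-4 matroids `N` whose number of
rank-3 flats is maximal among all rank-4 matroids with the same truncation to rank 3
(the truncation to rank 3 being determined by the independent sets of size at most 3). -/
theorem plp_iff_plp_on_free_erections (n : ℕ) :
    (∀ M : Matroid (Fin n), M.E = Set.univ → (∀ x y : Fin n, M.Indep {x, y}) →
        (∀ B, M.IsBase B → B.ncard = 4) → PLPIneq M) ↔
    (∀ N : Matroid (Fin n), N.E = Set.univ → (∀ x y : Fin n, N.Indep {x, y}) →
        (∀ B, N.IsBase B → B.ncard = 4) →
        (∀ N' : Matroid (Fin n), N'.E = Set.univ → (∀ B, N'.IsBase B → B.ncard = 4) →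
          (∀ I : Set (Fin n), (N'.Indep I ∧ I.ncard ≤ 3) ↔ (N.Indep I ∧ I.ncard ≤ 3)) →
          whitney N' 3 ≤ whitney N 3) →
        PLPIneq N) := by
  constructor
  · intro h N hE hs hr _
    exact h N hE hs hr
  · intro h M hME hMs hMr
    -- the set of rank-4 matroids with the same truncation as `M`
    set S : Set (Matroid (Fin n)) :=
      {N' | N'.E = Set.univ ∧ (∀ B, N'.IsBase B → B.ncard = 4) ∧
        ∀ I : Set (Fin n), (N'.Indep I ∧ I.ncard ≤ 3) ↔ (M.Indep I ∧ I.ncard ≤ 3)} with hS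
    have hMS : M ∈ S := ⟨hME, hMr, fun _ => Iff.rfl⟩
    -- choose a member of `S` maximizing `whitney _ 3`
    set V : Set ℕ := (fun N' => whitney N' 3) '' S with hV
    have hVne : V.Nonempty := ⟨whitney M 3, M, hMS, rfl⟩
    have hVbdd : BddAbove V := by
      refine ⟨Nat.card (Set (Fin n)), ?_⟩
      rintro v ⟨N', _, rfl⟩
      exact PLP.whitney_le N' 3
    obtain ⟨N, hNS, hNm⟩ := Nat.sSup_mem hVne hVbdd
    obtain ⟨hNE, hNr, hNT⟩ := hNS
    -- `N` is simple
    have hpair : ∀ x y : Fin n, ({x, y} : Set (Fin n)).ncard ≤ 3 := by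
      intro x y
      have := Set.ncard_insert_le x ({y} : Set (Fin n))
      simp only [Set.ncard_singleton] at this
      omega
    have hNs : ∀ x y : Fin n, N.Indep {x, y} := fun x y =>
      ((hNT {x, y}).2 ⟨hMs x y, hpair x y⟩).1
    -- maximality of `N`
    have hmax : ∀ N' : Matroid (Fin n), N'.E = Set.univ → (∀ B, N'.IsBase B → B.ncard = 4) →
        (∀ I : Set (Fin n), (N'.Indep I ∧ I.ncard ≤ 3) ↔ (N.Indep I ∧ I.ncard ≤ 3)) →
        whitney N' 3 ≤ whitney N 3 := by
      intro N' hE' hr' hT'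
      have hN'S : N' ∈ S := ⟨hE', hr', fun I => (hT' I).trans (hNT I)⟩
      have : whitney N' 3 ∈ V := ⟨N', hN'S, rfl⟩
      calc whitney N' 3 ≤ sSup V := le_csSup hVbdd this
        _ = whitney N 3 := hNm.symm
    have hPLP : PLPIneq N := h N hNE hNs hNr hmax
    -- transfer Whitney numbers
    have T : ∀ I : Set (Fin n), (M.Indep I ∧ I.ncard ≤ 3) ↔ (N.Indep I ∧ I.ncard ≤ 3) :=
      fun I => (hNT I).symm
    have hWeq : ∀ k ≤ 2, whitney M k = whitney N k := by
      intro k hk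
      have he : ∀ F, IsFlatOfRank M F k ↔ IsFlatOfRank N F k := fun F =>
        ⟨PLP.flat_transfer M N hME hNE T k hk F,
         PLP.flat_transfer N M hNE hME hNT k hk F⟩
      exact congrArg Nat.card (congrArg Subtype (funext fun F => propext (he F)))
    have hW1 : whitney M 1 = whitney N 1 := hWeq 1 (by norm_num)
    have hW2 : whitney M 2 = whitney N 2 := hWeq 2 le_rfl
    have hW3 : whitney M 3 ≤ whitney N 3 := hmax M hME hMr T
    have hW1ge : (4 : ℝ) ≤ (whitney N 1 : ℝ) := by
      exact_mod_cast PLP.whitney_one_ge N hNE hNs hNr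
    unfold PLPIneq at hPLP ⊢
    rw [hW1, hW2]
    have hc : 0 ≤ 3 * ((whitney N 1 : ℝ) - 1) / (2 * ((whitney N 1 : ℝ) - 2)) *
        (whitney N 1 : ℝ) := by
      apply mul_nonneg
      · apply div_nonneg <;> nlinarith
      · positivity
    refine le_trans ?_ hPLP
    apply mul_le_mul_of_nonneg_left _ hc
    exact_mod_cast hW3
end
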